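/- arXiv:1009.3949 — 3 statements merged into one kernel-verified Lean document; each statement's English description precedes it below -/
import Mathlib

section
/- Let n ≥ 2 be a natural number and f ∈ L²(ℝ₊ⁿ). If the contraction f ⌢_{n−1} f* vanishes almost everywhere on ℝ₊², then f = 0 almost everywhere on ℝ₊ⁿ. Consequently, if f is a nonzero mirror symmetric function in L²(ℝ₊ⁿ), then f ⌢_{n−1} f* is nonzero in L²(ℝ₊²). -/
open MeasureTheory
open scoped ENNReal

/-- Lebesgue measure on the half line `ℝ₊ = [0,∞)`. -/
noncomputable def mplus : Measure ℝ := volume.restrict (Set.Ici 0)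

/-- Lebesgue measure on `ℝ₊ⁿ`. -/
noncomputable def mpi (n : ℕ) : Measure (Fin n → ℝ) := Measure.pi fun _ => mplus

/-- The adjoint `f*(t₁,…,tₙ) = conj (f (tₙ,…,t₁))`. -/
noncomputable def adjointFn (n : ℕ) (f : (Fin n → ℝ) → ℂ) : (Fin n → ℝ) → ℂ :=
  fun t => starRingEnd ℂ (f fun i => t i.rev)

/-- The integrand appearing in the definition of the `p`-th contraction `f ⌢_p g`:
`f(t₁,…,t_{n-p},s₁,…,s_p) * g(s_p,…,s₁,t_{n-p+1},…,t_{n+m-2p})`. -/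
noncomputable def contrIntegrand (n m p : ℕ) (f : (Fin n → ℝ) → ℂ) (g : (Fin m → ℝ) → ℂ)
    (t : Fin (n + m - 2 * p) → ℝ) (s : Fin p → ℝ) : ℂ :=
  f (fun i => if _h : (i : ℕ) < n - p then
        (if h2 : (i : ℕ) < n + m - 2 * p then t ⟨(i : ℕ), h2⟩ else 0)
      else (if h3 : (i : ℕ) - (n - p) < p then s ⟨(i : ℕ) - (n - p), h3⟩ else 0)) *
  g (fun j => if _h : (j : ℕ) < p then
        (if h2 : p - 1 - (j : ℕ) < p then s ⟨p - 1 - (j : ℕ), h2⟩ else 0)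
      else (if h3 : (n - p) + ((j : ℕ) - p) < n + m - 2 * p then
          t ⟨(n - p) + ((j : ℕ) - p), h3⟩ else 0))

/-- The `p`-th contraction `f ⌢_p g` of `f ∈ L²(ℝ₊ⁿ)` and `g ∈ L²(ℝ₊ᵐ)`. -/
noncomputable def contraction (n m p : ℕ) (f : (Fin n → ℝ) → ℂ) (g : (Fin m → ℝ) → ℂ)
    (t : Fin (n + m - 2 * p) → ℝ) : ℂ :=
  ∫ s, contrIntegrand n m p f g t s ∂(mpi p)

instance : SigmaFinite mplus := by unfold mplus; infer_instance
instance (n : ℕ) : SigmaFinite (mpi n) := by unfold mpi; infer_instance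

lemma mplus_Iic_lt_top (q : ℝ) : mplus (Set.Iic q) < ∞ := by
  unfold mplus
  rw [Measure.restrict_apply measurableSet_Iic]
  calc volume (Set.Iic q ∩ Set.Ici 0) ≤ volume (Set.Icc 0 q) := by
        apply measure_mono; rintro x ⟨h1, h2⟩; exact ⟨h2, h1⟩
  _ < ∞ := by rw [Real.volume_Icc]; exact ENNReal.ofReal_lt_top

lemma ennreal_mul_le_sq_add_sq (a b : ℝ≥0∞) : a * b ≤ a ^ 2 + b ^ 2 := by
  rcases le_total a b with h | h
  · calc a * b ≤ b * b := mul_le_mul' h le_rfl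
    _ = b ^ 2 := (sq b).symm
    _ ≤ _ := le_add_self
  · calc a * b ≤ a * a := mul_le_mul' le_rfl h
    _ = a ^ 2 := (sq a).symm
    _ ≤ _ := le_self_add

lemma ennreal_le_one_add_sq (a : ℝ≥0∞) : a ≤ 1 + a ^ 2 := by
  rcases le_total a 1 with h | h
  · exact h.trans le_self_add
  · calc a = a * 1 := (mul_one a).symm
    _ ≤ a * a := mul_le_mul' le_rfl h
    _ = a ^ 2 := (sq a).symm
    _ ≤ _ := le_add_self

lemma memLp_lintegral_sq_lt_top {α : Type*} [MeasurableSpace α] {μ : Measure α}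
    {f : α → ℂ} (hf : MemLp f 2 μ) : ∫⁻ x, (‖f x‖₊ : ℝ≥0∞) ^ 2 ∂μ < ∞ := by
  have h := hf.2
  rw [eLpNorm_eq_lintegral_rpow_enorm_toReal two_ne_zero ENNReal.ofNat_ne_top] at h
  have h2 : (2 : ℝ≥0∞).toReal = (2 : ℝ) := by simp
  rw [h2] at h
  have : ∫⁻ x, (‖f x‖₊ : ℝ≥0∞) ^ (2 : ℝ) ∂μ < ∞ := by
    by_contra hc
    push_neg at hc
    have : ∫⁻ x, (‖f x‖₊ : ℝ≥0∞) ^ (2 : ℝ) ∂μ = ∞ := top_le_iff.mp hc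
    rw [show ∫⁻ x, ‖f x‖ₑ ^ (2 : ℝ) ∂μ = ∞ from this] at h
    simp [ENNReal.top_rpow_of_pos] at h
  simpa [ENNReal.rpow_natCast] using this

lemma real1D (r : ℝ → ℝ) (hsm : AEMeasurable r mplus)
    (hint : ∀ q : ℚ, IntegrableOn r (Set.Iic (q : ℝ)) mplus)
    (hz : ∀ q : ℚ, ∫ a in Set.Iic (q : ℝ), r a ∂mplus = 0) : r =ᵐ[mplus] 0 := by
  set ρp := mplus.withDensity (fun x => ENNReal.ofReal (r x)) with hρp
  set ρm := mplus.withDensity (fun x => ENNReal.ofReal (-r x)) with hρm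
  have hfinp : ∀ q : ℚ, ρp (Set.Iic (q : ℝ)) ≠ ∞ := by
    intro q
    rw [hρp, withDensity_apply _ measurableSet_Iic]
    refine ne_of_lt (lt_of_le_of_lt (lintegral_mono fun a => ?_) (hint q).2)
    exact Real.ofReal_le_enorm (r a)
  have hfinm : ∀ q : ℚ, ρm (Set.Iic (q : ℝ)) ≠ ∞ := by
    intro q
    rw [hρm, withDensity_apply _ measurableSet_Iic]
    refine ne_of_lt (lt_of_le_of_lt (lintegral_mono fun a => ?_) (hint q).2)
    calc ENNReal.ofReal (-r a) ≤ ‖(-r a)‖₊ := Real.ofReal_le_enorm _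
    _ = ‖r a‖₊ := by rw [nnnorm_neg]
  have hIic : ∀ q : ℚ, ρp (Set.Iic (q : ℝ)) = ρm (Set.Iic (q : ℝ)) := by
    intro q
    have h0 := hz q
    rw [integral_eq_lintegral_pos_part_sub_lintegral_neg_part (hint q)] at h0
    have h1 : ρp (Set.Iic (q : ℝ)) = ∫⁻ a in Set.Iic (q : ℝ), ENNReal.ofReal (r a) ∂mplus :=
      withDensity_apply _ measurableSet_Iic
    have h2 : ρm (Set.Iic (q : ℝ)) = ∫⁻ a in Set.Iic (q : ℝ), ENNReal.ofReal (-r a) ∂mplus :=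
      withDensity_apply _ measurableSet_Iic
    rw [← h1, ← h2] at h0
    have := sub_eq_zero.mp h0
    exact (ENNReal.toReal_eq_toReal_iff' (hfinp q) (hfinm q)).mp this
  have hρ : ρp = ρm := by
    refine Measure.ext_of_generateFrom_of_iUnion (⋃ q : ℚ, {Set.Iic (q : ℝ)})
      (fun n => Set.Iic ((n : ℚ) : ℝ)) ?_ ?_ ?_ ?_ ?_ ?_
    · rw [BorelSpace.measurable_eq (α := ℝ)]
      exact Real.borel_eq_generateFrom_Iic_rat
    · rintro s hs t ht -
      simp only [Set.mem_iUnion, Set.mem_singleton_iff] at hs ht ⊢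
      obtain ⟨q, rfl⟩ := hs
      obtain ⟨q', rfl⟩ := ht
      refine ⟨min q q', ?_⟩
      rw [Set.Iic_inter_Iic]
      push_cast
      rfl
    · ext x
      simp only [Set.mem_iUnion, Set.mem_Iic, Set.mem_univ, iff_true]
      obtain ⟨n, hn⟩ := exists_nat_ge x
      exact ⟨n, by push_cast; exact hn⟩
    · intro n
      simp only [Set.mem_iUnion, Set.mem_singleton_iff]
      exact ⟨n, rfl⟩
    · intro n; exact hfinp n
    · rintro s hs
      simp only [Set.mem_iUnion, Set.mem_singleton_iff] at hs
      obtain ⟨q, rfl⟩ := hs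
      exact hIic q
  have hae : (fun x => ENNReal.ofReal (r x)) =ᵐ[mplus] (fun x => ENNReal.ofReal (-r x)) := by
    refine (withDensity_eq_iff_of_sigmaFinite hsm.ennreal_ofReal ?_).mp hρ
    exact hsm.neg.ennreal_ofReal
  filter_upwards [hae] with x hx
  simp only [Pi.zero_apply]
  by_contra hne
  rcases lt_or_gt_of_ne hne with h | h
  · have h1 : ENNReal.ofReal (r x) = 0 := by simp [ENNReal.ofReal_eq_zero, h.le]
    have h2 : ENNReal.ofReal (-r x) ≠ 0 := by
      simp only [ne_eq, ENNReal.ofReal_eq_zero, not_le]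
      linarith
    exact h2 (hx.symm.trans h1)
  · have h1 : ENNReal.ofReal (-r x) = 0 := by
      simp only [ENNReal.ofReal_eq_zero]; linarith
    have h2 : ENNReal.ofReal (r x) ≠ 0 := by
      simp only [ne_eq, ENNReal.ofReal_eq_zero, not_le]; linarith
    exact h2 (hx.trans h1)

lemma cplx1D (g : ℝ → ℂ) (hsm : AEStronglyMeasurable g mplus)
    (hint : ∀ q : ℚ, IntegrableOn g (Set.Iic (q : ℝ)) mplus)
    (hz : ∀ q : ℚ, ∫ a in Set.Iic (q : ℝ), g a ∂mplus = 0) : g =ᵐ[mplus] 0 := by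
  have hre : (fun x => (g x).re) =ᵐ[mplus] 0 := by
    refine real1D _ (Complex.measurable_re.comp_aemeasurable hsm.aemeasurable) ?_ ?_
    · intro q; exact (hint q).re
    · intro q
      have := integral_re (hint q)
      rw [hz q] at this
      exact (by simpa using this.symm : (0:ℝ) = _).symm
  have him : (fun x => (g x).im) =ᵐ[mplus] 0 := by
    refine real1D _ (Complex.measurable_im.comp_aemeasurable hsm.aemeasurable) ?_ ?_
    · intro q; exact (hint q).im
    · intro q
      have := integral_im (hint q)
      rw [hz q] at this
      exact (by simpa using this.symm : (0:ℝ) = _).symm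
  filter_upwards [hre, him] with x h1 h2
  simp only [Pi.zero_apply] at h1 h2 ⊢
  exact Complex.ext (by simpa using h1) (by simpa using h2)

section Core

variable {β : Type*} [MeasurableSpace β]

lemma core_key (ν : Measure β) [SigmaFinite ν] (μA : Measure ℝ) [IsFiniteMeasure μA]
    (c : ℝ × β → ℝ≥0∞) (hc : Measurable c) :
    (∫⁻ z : β × ℝ × ℝ, c (z.2.1, z.1) ∂(ν.prod (μA.prod μA))
      = μA Set.univ * ∫⁻ w, c w ∂(μA.prod ν)) ∧
    (∫⁻ z : β × ℝ × ℝ, c (z.2.2, z.1) ∂(ν.prod (μA.prod μA))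
      = μA Set.univ * ∫⁻ w, c w ∂(μA.prod ν)) := by
  have hrhs : μA Set.univ * ∫⁻ w, c w ∂(μA.prod ν)
      = μA Set.univ * ∫⁻ s, ∫⁻ a, c (a, s) ∂μA ∂ν := by
    rw [lintegral_prod_symm _ hc.aemeasurable]
  have hm1 : Measurable fun z : β × ℝ × ℝ => c (z.2.1, z.1) :=
    hc.comp (measurable_snd.fst.prodMk measurable_fst)
  have hm2 : Measurable fun z : β × ℝ × ℝ => c (z.2.2, z.1) :=
    hc.comp (measurable_snd.snd.prodMk measurable_fst)
  constructor
  · rw [lintegral_prod (fun z : β × ℝ × ℝ => c (z.2.1, z.1)) hm1.aemeasurable]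
    have inner : ∀ s, ∫⁻ ab : ℝ × ℝ, c (ab.1, s) ∂(μA.prod μA)
        = μA Set.univ * ∫⁻ a, c (a, s) ∂μA := by
      intro s
      rw [lintegral_prod (fun ab : ℝ × ℝ => c (ab.1, s))
        ((hc.comp (measurable_fst.prodMk measurable_const)).aemeasurable)]
      simp only [lintegral_const]
      have hcs : Measurable fun a : ℝ => c (a, s) := hc.comp (measurable_id.prodMk measurable_const)
      rw [lintegral_mul_const _ hcs]
      ring
    simp_rw [inner]
    rw [lintegral_const_mul _ (Measurable.lintegral_prod_left' hc), hrhs]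
  · rw [lintegral_prod (fun z : β × ℝ × ℝ => c (z.2.2, z.1)) hm2.aemeasurable]
    have inner : ∀ s, ∫⁻ ab : ℝ × ℝ, c (ab.2, s) ∂(μA.prod μA)
        = μA Set.univ * ∫⁻ a, c (a, s) ∂μA := by
      intro s
      rw [lintegral_prod (fun ab : ℝ × ℝ => c (ab.2, s))
        ((hc.comp (measurable_snd.prodMk measurable_const)).aemeasurable)]
      dsimp only
      rw [lintegral_const]
      ring
    simp_rw [inner]
    rw [lintegral_const_mul _ (Measurable.lintegral_prod_left' hc), hrhs]

end Core

lemma core {β : Type*} [MeasurableSpace β] (ν : Measure β) [SigmaFinite ν]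
    (F : ℝ × β → ℂ) (hsm : StronglyMeasurable F)
    (hfin : ∫⁻ z, (‖F z‖₊ : ℝ≥0∞) ^ 2 ∂(mplus.prod ν) < ∞)
    (hK : ∀ᵐ ab ∂(mplus.prod mplus),
      ∫ s, F (ab.1, s) * (starRingEnd ℂ) (F (ab.2, s)) ∂ν = 0) :
    F =ᵐ[mplus.prod ν] 0 := by
  have hmF : Measurable F := hsm.measurable
  have hnsq : Measurable fun w : ℝ × β => (‖F w‖₊ : ℝ≥0∞) ^ 2 := (hmF.enorm).pow_const 2
  -- Step 1: for each rational q, the partial integral vanishes a.e.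
  have hq : ∀ q : ℚ, ∀ᵐ s ∂ν, ∫ a in Set.Iic (q : ℝ), F (a, s) ∂mplus = 0 := by
    intro q
    set A := Set.Iic (q : ℝ) with hA
    have hAmeas : MeasurableSet A := measurableSet_Iic
    set μA := mplus.restrict A with hμA
    haveI : IsFiniteMeasure μA := by
      constructor
      rw [hμA, Measure.restrict_apply_univ]
      exact mplus_Iic_lt_top _
    have hΨm : Measurable fun z : β × ℝ × ℝ =>
        F (z.2.1, z.1) * (starRingEnd ℂ) (F (z.2.2, z.1)) := by
      have h1 : Measurable fun z : β × ℝ × ℝ => F (z.2.1, z.1) :=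
        hmF.comp (measurable_snd.fst.prodMk measurable_fst)
      have h2 : Measurable fun z : β × ℝ × ℝ => F (z.2.2, z.1) :=
        hmF.comp (measurable_snd.snd.prodMk measurable_fst)
      exact h1.mul (show Measurable fun z : β × ℝ × ℝ => (starRingEnd ℂ) (F (z.2.2, z.1)) from (continuous_star.measurable).comp h2)
    -- integrability of Ψ on ν.prod (μA.prod μA)
    have hJ : ∫⁻ w, (‖F w‖₊ : ℝ≥0∞) ^ 2 ∂(μA.prod ν) < ∞ := by
      have hres : μA.prod ν = (mplus.prod ν).restrict (A ×ˢ Set.univ) := by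
        rw [← Measure.prod_restrict, Measure.restrict_univ]
      rw [hres]
      exact lt_of_le_of_lt (setLIntegral_le_lintegral _ _) hfin
    have hkey := core_key ν μA (fun w => (‖F w‖₊ : ℝ≥0∞) ^ 2) hnsq
    have hΨint : Integrable
        (fun z : β × ℝ × ℝ => F (z.2.1, z.1) * (starRingEnd ℂ) (F (z.2.2, z.1)))
        (ν.prod (μA.prod μA)) := by
      refine ⟨hΨm.aestronglyMeasurable, ?_⟩
      show (∫⁻ z, (‖F (z.2.1, z.1) * (starRingEnd ℂ) (F (z.2.2, z.1))‖₊ : ℝ≥0∞)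
        ∂(ν.prod (μA.prod μA))) < ∞
      calc ∫⁻ z, (‖F (z.2.1, z.1) * (starRingEnd ℂ) (F (z.2.2, z.1))‖₊ : ℝ≥0∞)
            ∂(ν.prod (μA.prod μA))
          ≤ ∫⁻ z, ((‖F (z.2.1, z.1)‖₊ : ℝ≥0∞) ^ 2 + (‖F (z.2.2, z.1)‖₊ : ℝ≥0∞) ^ 2)
            ∂(ν.prod (μA.prod μA)) := by
            refine lintegral_mono fun z => ?_
            calc (‖F (z.2.1, z.1) * (starRingEnd ℂ) (F (z.2.2, z.1))‖₊ : ℝ≥0∞)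
                = (‖F (z.2.1, z.1)‖₊ : ℝ≥0∞) * (‖F (z.2.2, z.1)‖₊ : ℝ≥0∞) := by
                  rw [nnnorm_mul, starRingEnd_apply, nnnorm_star]
                  push_cast
                  ring
            _ ≤ _ := ennreal_mul_le_sq_add_sq _ _
      _ = (∫⁻ z : β × ℝ × ℝ, (‖F (z.2.1, z.1)‖₊ : ℝ≥0∞) ^ 2 ∂(ν.prod (μA.prod μA)))
            + ∫⁻ z : β × ℝ × ℝ, (‖F (z.2.2, z.1)‖₊ : ℝ≥0∞) ^ 2 ∂(ν.prod (μA.prod μA)) := by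
            exact lintegral_add_left ((hmF.comp
              (measurable_snd.fst.prodMk measurable_fst)).enorm.pow_const 2) _
      _ < ∞ := by
            rw [hkey.1, hkey.2]
            have hAfin : μA Set.univ < ∞ := measure_lt_top _ _
            exact ENNReal.add_lt_top.mpr
              ⟨ENNReal.mul_lt_top hAfin hJ, ENNReal.mul_lt_top hAfin hJ⟩
    -- compute the double integral two ways
    have e2 : ∫ z : β × ℝ × ℝ,
        F (z.2.1, z.1) * (starRingEnd ℂ) (F (z.2.2, z.1)) ∂(ν.prod (μA.prod μA)) = 0 := by
      rw [integral_prod_symm _ hΨint]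
      have hres2 : μA.prod μA = (mplus.prod mplus).restrict (A ×ˢ A) := by
        rw [← Measure.prod_restrict]
      rw [hres2]
      have hK' : (fun ab : ℝ × ℝ => ∫ s, F (ab.1, s) * (starRingEnd ℂ) (F (ab.2, s)) ∂ν)
          =ᵐ[(mplus.prod mplus).restrict (A ×ˢ A)] 0 := ae_restrict_of_ae hK
      rw [integral_congr_ae hK']
      simp
    have e1 : ∫ z : β × ℝ × ℝ,
        F (z.2.1, z.1) * (starRingEnd ℂ) (F (z.2.2, z.1)) ∂(ν.prod (μA.prod μA))
        = ∫ s, (Complex.normSq (∫ a, F (a, s) ∂μA) : ℂ) ∂ν := by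
      rw [integral_prod _ hΨint]
      refine integral_congr_ae (Filter.Eventually.of_forall fun s => ?_)
      dsimp only
      have : ∫ ab : ℝ × ℝ, F (ab.1, s) * (starRingEnd ℂ) (F (ab.2, s)) ∂(μA.prod μA)
          = (∫ a, F (a, s) ∂μA) * ∫ b, (starRingEnd ℂ) (F (b, s)) ∂μA :=
        integral_prod_mul (f := fun a : ℝ => F (a, s)) (g := fun b : ℝ => (starRingEnd ℂ) (F (b, s)))
      rw [this, integral_conj, Complex.mul_conj]
    have hIntN : Integrable (fun s => (Complex.normSq (∫ a, F (a, s) ∂μA) : ℂ)) ν := by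
      have := hΨint.integral_prod_left
      refine this.congr (Filter.Eventually.of_forall fun s => ?_)
      have h := integral_prod_mul (μ := μA) (ν := μA) (fun a => F (a, s))
        (fun b => (starRingEnd ℂ) (F (b, s)))
      dsimp only at h ⊢
      rw [h, integral_conj, Complex.mul_conj]
    have h0 : ∫ s, Complex.normSq (∫ a, F (a, s) ∂μA) ∂ν = 0 := by
      have hr := integral_re hIntN
      rw [e1.symm.trans e2] at hr
      simpa using hr
    have hnn : (fun s => Complex.normSq (∫ a, F (a, s) ∂μA)) =ᵐ[ν] 0 := by
      rw [← integral_eq_zero_iff_of_nonneg (fun s => Complex.normSq_nonneg _) ?_]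
      · exact h0
      · refine hIntN.re.congr (Filter.Eventually.of_forall fun s => ?_)
        simp
    filter_upwards [hnn] with s hs
    have : (∫ a, F (a, s) ∂μA) = 0 := Complex.normSq_eq_zero.mp hs
    exact this
  -- Step 2: a.e. slice properties
  have hq' : ∀ᵐ s ∂ν, ∀ q : ℚ, ∫ a in Set.Iic (q : ℝ), F (a, s) ∂mplus = 0 := ae_all_iff.mpr hq
  have hslice : ∀ᵐ s ∂ν, ∫⁻ a, (‖F (a, s)‖₊ : ℝ≥0∞) ^ 2 ∂mplus < ∞ := by
    have hswap : ∫⁻ s, ∫⁻ a, (‖F (a, s)‖₊ : ℝ≥0∞) ^ 2 ∂mplus ∂ν < ∞ := by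
      rw [← lintegral_prod_symm _ hnsq.aemeasurable]
      exact hfin
    exact ae_lt_top (Measurable.lintegral_prod_left' hnsq) hswap.ne
  have hmain : ∀ᵐ s ∂ν, ∀ᵐ a ∂mplus, F (a, s) = 0 := by
    filter_upwards [hq', hslice] with s h1 h2
    have hgm : AEStronglyMeasurable (fun a => F (a, s)) mplus :=
      (hsm.comp_measurable (measurable_id.prodMk measurable_const)).aestronglyMeasurable
    have hint : ∀ p : ℚ, IntegrableOn (fun a => F (a, s)) (Set.Iic (p : ℝ)) mplus := by
      intro p
      refine ⟨hgm.restrict, ?_⟩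
      show (∫⁻ a in Set.Iic (p : ℝ), (‖F (a, s)‖₊ : ℝ≥0∞) ∂mplus) < ∞
      calc ∫⁻ a in Set.Iic (p : ℝ), (‖F (a, s)‖₊ : ℝ≥0∞) ∂mplus
          ≤ ∫⁻ a in Set.Iic (p : ℝ), (1 + (‖F (a, s)‖₊ : ℝ≥0∞) ^ 2) ∂mplus :=
            lintegral_mono fun a => ennreal_le_one_add_sq _
      _ = mplus (Set.Iic (p : ℝ)) + ∫⁻ a in Set.Iic (p : ℝ), (‖F (a, s)‖₊ : ℝ≥0∞) ^ 2 ∂mplus := by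
            rw [lintegral_add_left measurable_const, setLIntegral_one]
      _ < ∞ := by
            refine ENNReal.add_lt_top.mpr ⟨mplus_Iic_lt_top _, ?_⟩
            exact lt_of_le_of_lt (setLIntegral_le_lintegral _ _) h2
    have hz := cplx1D _ hgm hint h1
    filter_upwards [hz] with a ha
    simpa using ha
  -- Step 3: assemble
  have hM : MeasurableSet {w : β × ℝ | F (w.2, w.1) ≠ 0} := by
    have : Measurable fun w : β × ℝ => F (w.2, w.1) :=
      hmF.comp (measurable_snd.prodMk measurable_fst)
    exact (this (measurableSet_singleton 0)).compl
  have hMnull : (ν.prod mplus) {w : β × ℝ | F (w.2, w.1) ≠ 0} = 0 := by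
    rw [Measure.measure_prod_null hM]
    filter_upwards [hmain] with s hs
    rw [ae_iff] at hs
    exact hs
  rw [Filter.EventuallyEq, ae_iff]
  have hsame : {z : ℝ × β | ¬F z = (0 : (ℝ × β) → ℂ) z}
      = Prod.swap ⁻¹' {w : β × ℝ | F (w.2, w.1) ≠ 0} := by
    ext z
    simp [Prod.swap]
  rw [hsame]
  calc (mplus.prod ν) (Prod.swap ⁻¹' {w : β × ℝ | F (w.2, w.1) ≠ 0})
      = (Measure.map Prod.swap (mplus.prod ν)) {w : β × ℝ | F (w.2, w.1) ≠ 0} :=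
        (Measure.map_apply measurable_swap hM).symm
  _ = (ν.prod mplus) {w : β × ℝ | F (w.2, w.1) ≠ 0} := by rw [Measure.prod_swap]
  _ = 0 := hMnull

noncomputable def A1 (k E np : ℕ) (t : Fin E → ℝ) (s : Fin (k + 2 - 1) → ℝ) :
    Fin (k + 2) → ℝ :=
  fun i => if _h : (i : ℕ) < np then
      (if h2 : (i : ℕ) < E then t ⟨(i : ℕ), h2⟩ else 0)
    else (if h3 : (i : ℕ) - np < k + 2 - 1 then s ⟨(i : ℕ) - np, h3⟩ else 0)

noncomputable def A2 (k E np : ℕ) (t : Fin E → ℝ) (s : Fin (k + 2 - 1) → ℝ) :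
    Fin (k + 2) → ℝ :=
  fun j => if _h : (j : ℕ) < k + 2 - 1 then
      (if h2 : k + 2 - 1 - 1 - (j : ℕ) < k + 2 - 1 then s ⟨k + 2 - 1 - 1 - (j : ℕ), h2⟩ else 0)
    else (if h3 : np + ((j : ℕ) - (k + 2 - 1)) < E then t ⟨np + ((j : ℕ) - (k + 2 - 1)), h3⟩
      else 0)

noncomputable def myK (k E np : ℕ) (f : (Fin (k + 2) → ℝ) → ℂ) : (Fin E → ℝ) → ℂ :=
  fun t => ∫ s, f (A1 k E np t s) *
    (starRingEnd ℂ) (f fun i => A2 k E np t s i.rev) ∂(mpi (k + 2 - 1))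

lemma A1_eval (k : ℕ) (t : Fin 2 → ℝ) (s : Fin (k + 1) → ℝ) :
    A1 k 2 1 t s = Fin.cons (t 0) s := by
  funext i
  refine Fin.cases ?_ ?_ i
  · show A1 k 2 1 t s 0 = t 0
    unfold A1
    rw [dif_pos (by norm_num), dif_pos (by norm_num)]
    congr 1
  · intro j
    show A1 k 2 1 t s j.succ = s j
    unfold A1
    have hval : ((j.succ : Fin (k + 2)) : ℕ) = (j : ℕ) + 1 := rfl
    rw [dif_neg (by omega), dif_pos (by omega)]
    exact congrArg s (Fin.ext (by simp))

lemma A2_eval (k : ℕ) (t : Fin 2 → ℝ) (s : Fin (k + 1) → ℝ) :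
    (fun i : Fin (k + 2) => A2 k 2 1 t s i.rev) = Fin.cons (t 1) s := by
  funext i
  refine Fin.cases ?_ ?_ i
  · show A2 k 2 1 t s (Fin.rev 0) = t 1
    unfold A2
    have hval : ((Fin.rev (0 : Fin (k + 2))) : ℕ) = k + 1 := by
      rw [Fin.val_rev]
      simp
    rw [dif_neg (by omega), dif_pos (by omega)]
    congr 1
    ext
    simp [hval]
  · intro j
    show A2 k 2 1 t s (Fin.rev j.succ) = s j
    unfold A2
    have hval : ((Fin.rev (j.succ : Fin (k + 2))) : ℕ) = k - (j : ℕ) := by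
      rw [Fin.val_rev]
      have := j.isLt
      simp only [Fin.val_succ]
      omega
    have hj := j.isLt
    rw [dif_pos (by omega)]
    rw [dif_pos (by omega)]
    congr 1
    ext
    simp only [hval]
    omega

lemma myK_eval (k : ℕ) (f : (Fin (k + 2) → ℝ) → ℂ) (t : Fin 2 → ℝ) :
    myK k 2 1 f t = ∫ s, f (Fin.cons (t 0) s) *
      (starRingEnd ℂ) (f (Fin.cons (t 1) s)) ∂(mpi (k + 1)) := by
  show (∫ s : Fin (k + 1) → ℝ, f (A1 k 2 1 t s) *
      (starRingEnd ℂ) (f fun i => A2 k 2 1 t s i.rev) ∂(mpi (k + 1))) = _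
  refine integral_congr_ae (Filter.Eventually.of_forall fun s => ?_)
  dsimp only
  rw [A1_eval, A2_eval]


theorem stmt4 (n : ℕ) (hn : 2 ≤ n) (f : (Fin n → ℝ) → ℂ) (hf : MemLp f 2 (mpi n)) :
    ((contraction n n (n - 1) f (adjointFn n f) =ᵐ[mpi (n + n - 2 * (n - 1))] 0) →
      f =ᵐ[mpi n] 0) ∧
    ((f =ᵐ[mpi n] adjointFn n f) → ¬(f =ᵐ[mpi n] 0) →
      ¬(contraction n n (n - 1) f (adjointFn n f) =ᵐ[mpi (n + n - 2 * (n - 1))] 0)) := by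
  have main : (contraction n n (n - 1) f (adjointFn n f) =ᵐ[mpi (n + n - 2 * (n - 1))] 0) →
      f =ᵐ[mpi n] 0 := by
    intro hC
    obtain ⟨k, rfl⟩ : ∃ k, n = k + 2 := ⟨n - 2, by omega⟩
    have hCmy : myK k (k + 2 + (k + 2) - 2 * (k + 2 - 1)) (k + 2 - (k + 2 - 1)) f
        =ᵐ[mpi (k + 2 + (k + 2) - 2 * (k + 2 - 1))] 0 := hC
    have hE : k + 2 + (k + 2) - 2 * (k + 2 - 1) = 2 := by omega
    have hnp : k + 2 - (k + 2 - 1) = 1 := by omega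
    rw [hE, hnp] at hCmy
    set ν := mpi (k + 1) with hν
    set F' : ℝ × (Fin (k + 1) → ℝ) → ℂ := fun p => f (Fin.cons p.1 p.2) with hF'def
    -- transfer the hypothesis to ℝ × ℝ
    have hmp2 : MeasurePreserving (⇑(MeasurableEquiv.finTwoArrow (α := ℝ)).symm)
        (mplus.prod mplus) (mpi 2) :=
      MeasurePreserving.symm _ (measurePreserving_finTwoArrow mplus)
    have hcomp := hmp2.quasiMeasurePreserving.ae_eq_comp hCmy
    have hzero : ((0 : (Fin 2 → ℝ) → ℂ) ∘ ⇑(MeasurableEquiv.finTwoArrow (α := ℝ)).symm)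
        = 0 := rfl
    rw [hzero] at hcomp
    have heval : (myK k 2 1 f) ∘ ⇑(MeasurableEquiv.finTwoArrow (α := ℝ)).symm
        = fun ab : ℝ × ℝ => ∫ s, F' (ab.1, s) * (starRingEnd ℂ) (F' (ab.2, s)) ∂ν := by
      funext ab
      show myK k 2 1 f ((MeasurableEquiv.finTwoArrow (α := ℝ)).symm ab) = _
      have ht0 : ((MeasurableEquiv.finTwoArrow (α := ℝ)).symm ab) 0 = ab.1 := by
        simp [MeasurableEquiv.finTwoArrow]
      have ht1 : ((MeasurableEquiv.finTwoArrow (α := ℝ)).symm ab) 1 = ab.2 := by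
        simp [MeasurableEquiv.finTwoArrow]
      rw [myK_eval, ht0, ht1]
    rw [heval] at hcomp
    -- MemLp of F'
    have hmp1 : MeasurePreserving (fun p : ℝ × (Fin (k + 1) → ℝ) => Fin.cons p.1 p.2)
        (mplus.prod ν) (mpi (k + 2)) := by
      have h := MeasurePreserving.symm _
        (measurePreserving_piFinSuccAbove (fun _ : Fin (k + 2) => mplus) 0)
      have hco : ⇑(MeasurableEquiv.piFinSuccAbove (fun _ : Fin (k + 2) => ℝ) 0).symm
          = fun p : ℝ × (Fin (k + 1) → ℝ) => Fin.cons p.1 p.2 := by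
        funext p
        simp_rw [MeasurableEquiv.piFinSuccAbove_symm_apply, Fin.insertNthEquiv,
          Equiv.coe_fn_mk, Fin.insertNth_zero']
      rw [hco] at h
      exact h
    have hF' : MemLp F' 2 (mplus.prod ν) := hf.comp_measurePreserving hmp1
    -- strongly measurable representative
    obtain ⟨F₀, hsm₀, hFF⟩ : ∃ F₀, StronglyMeasurable F₀ ∧ F' =ᵐ[mplus.prod ν] F₀ :=
      ⟨hF'.1.mk F', hF'.1.stronglyMeasurable_mk, hF'.1.ae_eq_mk⟩
    have hF₀ : MemLp F₀ 2 (mplus.prod ν) := hF'.ae_eq hFF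
    have hfin₀ := memLp_lintegral_sq_lt_top hF₀
    have hslices : ∀ᵐ a ∂mplus, (fun s => F' (a, s)) =ᵐ[ν] fun s => F₀ (a, s) :=
      Measure.ae_ae_of_ae_prod hFF
    have hfst : ∀ᵐ ab : ℝ × ℝ ∂(mplus.prod mplus),
        (fun s => F' (ab.1, s)) =ᵐ[ν] fun s => F₀ (ab.1, s) :=
      Measure.quasiMeasurePreserving_fst.tendsto_ae.eventually hslices
    have hsnd : ∀ᵐ ab : ℝ × ℝ ∂(mplus.prod mplus),
        (fun s => F' (ab.2, s)) =ᵐ[ν] fun s => F₀ (ab.2, s) :=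
      Measure.quasiMeasurePreserving_snd.tendsto_ae.eventually hslices
    have hK₀ : ∀ᵐ ab : ℝ × ℝ ∂(mplus.prod mplus),
        ∫ s, F₀ (ab.1, s) * (starRingEnd ℂ) (F₀ (ab.2, s)) ∂ν = 0 := by
      filter_upwards [hcomp, hfst, hsnd] with ab h0 h1 h2
      have h0' : ∫ s, F' (ab.1, s) * (starRingEnd ℂ) (F' (ab.2, s)) ∂ν = 0 := h0
      rw [← h0']
      refine integral_congr_ae ?_
      filter_upwards [h1, h2] with s e1 e2
      rw [e1, e2]
    have hcore := core ν F₀ hsm₀ hfin₀ hK₀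
    have hF'0 : F' =ᵐ[mplus.prod ν] 0 := hFF.trans hcore
    -- back to f
    have hmp3 : MeasurePreserving
        (⇑(MeasurableEquiv.piFinSuccAbove (fun _ : Fin (k + 2) => ℝ) 0))
        (mpi (k + 2)) (mplus.prod ν) := measurePreserving_piFinSuccAbove _ 0
    have hcomp2 := hmp3.quasiMeasurePreserving.ae_eq_comp hF'0
    have hzero2 : ((0 : ℝ × (Fin (k + 1) → ℝ) → ℂ)
        ∘ ⇑(MeasurableEquiv.piFinSuccAbove (fun _ : Fin (k + 2) => ℝ) 0)) = 0 := rfl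
    rw [hzero2] at hcomp2
    have hfe : F' ∘ ⇑(MeasurableEquiv.piFinSuccAbove (fun _ : Fin (k + 2) => ℝ) 0) = f := by
      funext x
      show F' ((MeasurableEquiv.piFinSuccAbove (fun _ : Fin (k + 2) => ℝ) 0) x) = f x
      rw [MeasurableEquiv.piFinSuccAbove_apply]
      show f (Fin.cons (x 0) ((0 : Fin (k + 2)).removeNth x)) = f x
      rw [Fin.removeNth_zero, Fin.cons_self_tail]
    rw [hfe] at hcomp2
    exact hcomp2
  exact ⟨main, fun _ hne hc => hne (main hc)⟩
end

section
/- Let n₁,…,n_r be positive integers with n = n₁+⋯+n_r even, let f_i ∈ L²(ℝ₊^{n_i}) for 1 ≤ i ≤ r, and let π be a pairing of [n] that respects the interval partition n₁⊗⋯⊗n_r. Then the pairing integral ∫_π f₁⊗⋯⊗f_r exists (the defining integrand is absolutely integrable over ℝ₊^{n/2}), and |∫_π f₁⊗⋯⊗f_r| ≤ ‖f₁‖_{L²(ℝ₊^{n₁})} ⋯ ‖f_r‖_{L²(ℝ₊^{n_r})}. -/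
open MeasureTheory
open scoped ENNReal
open Function

/-- A pairing (perfect matching) of `{0,…,N-1}`, encoded as a fixed-point-free involution;
the blocks of the pairing are the sets `{i, pair i}`. -/
structure Pairing (N : ℕ) where
  pair : Fin N → Fin N
  involutive : ∀ i, pair (pair i) = i
  fixedFree : ∀ i, pair i ≠ i

/-- A pairing is noncrossing if there are no indices `i < j < pair i < pair j`. -/
def Pairing.IsNoncrossing {N : ℕ} (P : Pairing N) : Prop :=
  ¬ ∃ i j : Fin N, i < j ∧ j < P.pair i ∧ P.pair i < P.pair j

/-- The smaller element of the block of `j`. -/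
def Pairing.leader {N : ℕ} (P : Pairing N) (j : Fin N) : {i : Fin N // i < P.pair i} :=
  if h : j < P.pair j then ⟨j, h⟩
  else ⟨P.pair j, by
    have h1 := P.involutive j
    have h2 := P.fixedFree j
    rw [h1]
    exact lt_of_le_of_ne (not_lt.mp h) h2⟩

/-- The pairing integral `∫_π F`: the integral over `ℝ₊^{N/2}` obtained from `F` by
identifying the variables `t_i = t_j` for each block `{i,j}` of the pairing. -/
noncomputable def pairingIntegral {N : ℕ} (P : Pairing N) (F : (Fin N → ℝ) → ℂ) : ℂ :=
  ∫ x : ({i : Fin N // i < P.pair i} → ℝ), F (fun j => x (P.leader j))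
    ∂(Measure.pi fun _ => mplus)

/-- Start index (0-based) of the `i`-th block of the interval partition `n₁ ⊗ ⋯ ⊗ n_r`. -/
def blockStart {r : ℕ} (nn : Fin r → ℕ) (i : Fin r) : ℕ := ∑ k ∈ Finset.Iio i, nn k

/-- `j` (0-based) lies in the `i`-th block of the interval partition `n₁ ⊗ ⋯ ⊗ n_r`. -/
def inBlock {r : ℕ} (nn : Fin r → ℕ) (i : Fin r) (j : ℕ) : Prop :=
  blockStart nn i ≤ j ∧ j < blockStart nn i + nn i

/-- The pairing respects the interval partition `n₁ ⊗ ⋯ ⊗ n_r`: no block of the pairing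
contains two elements of the same interval block. -/
def Respects {N r : ℕ} (nn : Fin r → ℕ) (P : Pairing N) : Prop :=
  ∀ j : Fin N, ∀ i : Fin r, inBlock nn i (j : ℕ) → ¬ inBlock nn i ((P.pair j : ℕ))

/-- The tensor product `f₁ ⊗ ⋯ ⊗ f_r` as a function on `ℝ₊^N`, `N = n₁ + ⋯ + n_r`. -/
noncomputable def tensorFam {r : ℕ} (nn : Fin r → ℕ)
    (f : (i : Fin r) → (Fin (nn i) → ℝ) → ℂ) (N : ℕ) (x : Fin N → ℝ) : ℂ :=
  ∏ i, f i (fun j =>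
    if h : blockStart nn i + (j : ℕ) < N then x ⟨blockStart nn i + (j : ℕ), h⟩ else 0)


instance inst_s5 : SigmaFinite mplus := by unfold mplus; infer_instance

lemma two_conj : Real.HolderConjugate 2 2 := Real.HolderConjugate.two_two

lemma rpow_half_sq (y : ℝ≥0∞) : (y ^ ((1:ℝ)/2)) ^ (2:ℝ) = y := by
  rw [← ENNReal.rpow_mul]; norm_num

lemma sq_rpow_half (y : ℝ≥0∞) : (y ^ (2:ℝ)) ^ ((1:ℝ)/2) = y := by
  rw [← ENNReal.rpow_mul]; norm_num

/-- Core inequality: if each variable in `D` lies in exactly two of the sets `S i`,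
and `G i` depends only on coordinates in `S i ⊆ D`, then the iterated integral of the
product over the variables in `D` is bounded by the product of the `L²` norms. -/
lemma core_s5 {ι V : Type*} [Fintype ι] [DecidableEq ι] [Fintype V] [DecidableEq V]
    (D : Finset V) :
    ∀ (S : ι → Finset V) (G : ι → (V → ℝ) → ℝ≥0∞),
    (∀ i, Measurable (G i)) →
    (∀ i (x y : V → ℝ), (∀ v ∈ S i, x v = y v) → G i x = G i y) →
    (∀ i, S i ⊆ D) →
    (∀ v ∈ D, (Finset.univ.filter (fun i => v ∈ S i)).card = 2) →
    ∀ x, (∫⋯∫⁻_D, (fun z => ∏ i, G i z) ∂(fun _ => mplus)) x ≤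
      ∏ i, ((∫⋯∫⁻_(S i), (fun z => (G i z) ^ (2:ℝ)) ∂(fun _ => mplus)) x) ^ ((1:ℝ)/2) := by
  induction D using Finset.strongInduction with
  | _ D ih =>
    intro S G hmeas hdep hsub hcount x
    rcases Finset.eq_empty_or_nonempty D with rfl | ⟨v₀, hv₀⟩
    · -- base case
      have hS : ∀ i, S i = ∅ := fun i => Finset.subset_empty.mp (hsub i)
      simp only [lmarginal_empty, hS, sq_rpow_half, le_refl]
    · -- the two indices whose set contains v₀
      obtain ⟨a, b, hab, hfab⟩ := Finset.card_eq_two.mp (hcount v₀ hv₀)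
      have hmem : ∀ i, v₀ ∈ S i ↔ i = a ∨ i = b := by
        intro i
        have := Finset.ext_iff.mp hfab i
        simp only [Finset.mem_filter, Finset.mem_univ, true_and, Finset.mem_insert,
          Finset.mem_singleton] at this
        exact this
      set G' : ι → (V → ℝ) → ℝ≥0∞ := fun i x =>
        ((∫⋯∫⁻_(S i ∩ {v₀}), (fun z => (G i z) ^ (2:ℝ)) ∂(fun _ => mplus)) x) ^ ((1:ℝ)/2) with hG'
      set S' : ι → Finset V := fun i => S i \ {v₀} with hS'
      have hmeas2 : ∀ i, Measurable (fun z => (G i z) ^ (2:ℝ)) :=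
        fun i => (hmeas i).pow_const _
      have hmeas' : ∀ i, Measurable (G' i) :=
        fun i => ((hmeas2 i).lmarginal (fun _ => mplus)).pow_const _
      have hdep' : ∀ i (x y : V → ℝ), (∀ v ∈ S' i, x v = y v) → G' i x = G' i y := by
        intro i x y hxy
        simp only [hG', lmarginal]
        congr 1
        refine lintegral_congr fun z => ?_
        congr 1
        refine hdep i _ _ fun v hv => ?_
        simp only [updateFinset]
        split_ifs with h
        · rfl
        · refine hxy v ?_
          simp only [hS', Finset.mem_sdiff, Finset.mem_singleton]
          exact ⟨hv, fun hvv => h (Finset.mem_inter.mpr ⟨hv, by simp [hvv]⟩)⟩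
      -- G' i = G i for i ∉ {a, b}
      have hG'eq : ∀ i, i ≠ a → i ≠ b → G' i = G i := by
        intro i hia hib
        have : S i ∩ {v₀} = ∅ := by
          rw [Finset.eq_empty_iff_forall_notMem]
          intro v hv
          rcases Finset.mem_inter.mp hv with ⟨h1, h2⟩
          rw [Finset.mem_singleton] at h2; subst h2
          rcases (hmem i).mp h1 with h | h
          · exact hia h
          · exact hib h
        funext z
        simp only [hG', this, lmarginal_empty, sq_rpow_half]
      -- the two special values
      have hSav : S a ∩ {v₀} = {v₀} := by
        apply Finset.inter_eq_right.mpr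
        simpa using (hmem a).mpr (Or.inl rfl)
      have hSbv : S b ∩ {v₀} = {v₀} := by
        apply Finset.inter_eq_right.mpr
        simpa using (hmem b).mpr (Or.inr rfl)
      have hG'a : ∀ y, G' a y = (∫⁻ t, (G a (update y v₀ t)) ^ (2:ℝ) ∂mplus) ^ ((1:ℝ)/2) := by
        intro y; simp only [hG', hSav, lmarginal_singleton]
      have hG'b : ∀ y, G' b y = (∫⁻ t, (G b (update y v₀ t)) ^ (2:ℝ) ∂mplus) ^ ((1:ℝ)/2) := by
        intro y; simp only [hG', hSbv, lmarginal_singleton]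
      -- pointwise inner bound
      have hinner : ∀ y : V → ℝ,
          (∫⁻ t, (∏ i, G i (update y v₀ t)) ∂mplus) ≤ ∏ i, G' i y := by
        intro y
        set T : Finset ι := (Finset.univ.erase a).erase b with hT
        have hbmem : b ∈ Finset.univ.erase a := Finset.mem_erase.mpr ⟨hab.symm, Finset.mem_univ b⟩
        have hrest : ∀ i ∈ T, ∀ t, G i (update y v₀ t) = G i y := by
          intro i hi t
          rcases Finset.mem_erase.mp hi with ⟨hib, hi'⟩
          rcases Finset.mem_erase.mp hi' with ⟨hia, _⟩
          refine hdep i _ _ fun v hv => ?_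
          have hvne : v ≠ v₀ := by
            intro h; subst h
            rcases (hmem i).mp hv with rfl | rfl
            · exact hia rfl
            · exact hib rfl
          exact update_of_ne hvne _ _
        have hsplit : ∀ u : V → ℝ, (∏ i, G i u) = G a u * (G b u * ∏ i ∈ T, G i u) := by
          intro u
          rw [← Finset.mul_prod_erase Finset.univ _ (Finset.mem_univ a),
              ← Finset.mul_prod_erase _ _ hbmem]
        have hintegrand : ∀ t, (∏ i, G i (update y v₀ t))
            = (∏ i ∈ T, G i y) * (G a (update y v₀ t) * G b (update y v₀ t)) := by
          intro t
          rw [hsplit]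
          rw [Finset.prod_congr rfl (fun i hi => hrest i hi t)]
          ring
        calc (∫⁻ t, (∏ i, G i (update y v₀ t)) ∂mplus)
            = (∏ i ∈ T, G i y) *
              ∫⁻ t, (G a (update y v₀ t) * G b (update y v₀ t)) ∂mplus := by
              simp_rw [hintegrand]
              exact lintegral_const_mul _
                (((hmeas a).comp (measurable_update y)).mul
                  ((hmeas b).comp (measurable_update y)))
          _ ≤ (∏ i ∈ T, G i y) * (G' a y * G' b y) := by
              gcongr
              rw [hG'a, hG'b]
              exact ENNReal.lintegral_mul_le_Lp_mul_Lq mplus two_conj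
                (((hmeas a).comp (measurable_update y)).aemeasurable)
                (((hmeas b).comp (measurable_update y)).aemeasurable)
          _ = ∏ i, G' i y := by
              have h2 : (∏ i, G' i y) = G' a y * (G' b y * ∏ i ∈ T, G' i y) := by
                rw [← Finset.mul_prod_erase Finset.univ _ (Finset.mem_univ a),
                    ← Finset.mul_prod_erase _ _ hbmem]
              have h3 : ∏ i ∈ T, G' i y = ∏ i ∈ T, G i y :=
                Finset.prod_congr rfl (fun i hi => by
                  rcases Finset.mem_erase.mp hi with ⟨hib, hi'⟩
                  rcases Finset.mem_erase.mp hi' with ⟨hia, _⟩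
                  rw [hG'eq i hia hib])
              rw [h2, h3]; ring
      -- main chain
      have hprodmeas : Measurable (fun z => ∏ i, G i z) :=
        Finset.measurable_prod _ (fun i _ => hmeas i)
      have hDsub : D.erase v₀ ⊂ D := Finset.erase_ssubset hv₀
      have hsub' : ∀ i, S' i ⊆ D.erase v₀ := by
        intro i v hv
        rcases Finset.mem_sdiff.mp hv with ⟨h1, h2⟩
        exact Finset.mem_erase.mpr ⟨by simpa using h2, hsub i h1⟩
      have hcount' : ∀ v ∈ D.erase v₀,
          (Finset.univ.filter (fun i => v ∈ S' i)).card = 2 := by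
        intro v hv
        rcases Finset.mem_erase.mp hv with ⟨hne, hvD⟩
        have heq : (Finset.univ.filter (fun i => v ∈ S' i))
            = Finset.univ.filter (fun i => v ∈ S i) := by
          apply Finset.filter_congr
          intro i _
          simp [hS', Finset.mem_sdiff, hne]
        rw [heq]; exact hcount v hvD
      calc (∫⋯∫⁻_D, (fun z => ∏ i, G i z) ∂(fun _ => mplus)) x
          = (∫⋯∫⁻_(D.erase v₀),
              (fun y => ∫⁻ t, (∏ i, G i (update y v₀ t)) ∂mplus) ∂(fun _ => mplus)) x := by
            rw [lmarginal_erase' (μ := fun _ => mplus) _ hprodmeas hv₀]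
        _ ≤ (∫⋯∫⁻_(D.erase v₀), (fun z => ∏ i, G' i z) ∂(fun _ => mplus)) x :=
            lmarginal_mono hinner x
        _ ≤ ∏ i, ((∫⋯∫⁻_(S' i), (fun z => (G' i z) ^ (2:ℝ)) ∂(fun _ => mplus)) x) ^ ((1:ℝ)/2) :=
            ih _ hDsub S' G' hmeas' hdep' hsub' hcount' x
        _ = ∏ i, ((∫⋯∫⁻_(S i), (fun z => (G i z) ^ (2:ℝ)) ∂(fun _ => mplus)) x) ^ ((1:ℝ)/2) := by
            refine Finset.prod_congr rfl (fun i _ => ?_)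
            congr 1
            have hsq : (fun z => (G' i z) ^ (2:ℝ))
                = ∫⋯∫⁻_(S i ∩ {v₀}), (fun z => (G i z) ^ (2:ℝ)) ∂(fun _ => mplus) :=
              funext fun z => rpow_half_sq _
            rw [hsq, ← lmarginal_union (fun _ => mplus) _ (hmeas2 i)
              (Finset.disjoint_sdiff_inter (S i) {v₀}), Finset.sdiff_union_inter]

section Blocks

variable {r : ℕ} (nn : Fin r → ℕ)

lemma blockStart_add_le (i : Fin r) : blockStart nn i + nn i ≤ ∑ k, nn k := by
  have h1 : blockStart nn i + nn i = ∑ k ∈ insert i (Finset.Iio i), nn k := by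
    rw [Finset.sum_insert (by simp)]; unfold blockStart; ring
  rw [h1]
  exact Finset.sum_le_sum_of_subset (Finset.subset_univ _)

lemma blockStart_lt (i : Fin r) (j : Fin (nn i)) : blockStart nn i + (j : ℕ) < ∑ k, nn k :=
  lt_of_lt_of_le (by have := j.2; omega) (blockStart_add_le nn i)

lemma inBlock_unique {i i' : Fin r} {q : ℕ} (h : inBlock nn i q) (h' : inBlock nn i' q) :
    i = i' := by
  by_contra hne
  have key : ∀ a b : Fin r, a < b → inBlock nn a q → inBlock nn b q → False := by
    intro a b hab ha hb
    obtain ⟨ha1, ha2⟩ := ha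
    obtain ⟨hb1, hb2⟩ := hb
    have hle : blockStart nn a + nn a ≤ blockStart nn b := by
      have hsub : insert a (Finset.Iio a) ⊆ Finset.Iio b := by
        intro k hk
        simp only [Finset.mem_insert, Finset.mem_Iio] at hk ⊢
        rcases hk with rfl | hk
        · exact hab
        · exact hk.trans hab
      calc blockStart nn a + nn a = ∑ k ∈ insert a (Finset.Iio a), nn k := by
            rw [Finset.sum_insert (by simp)]; unfold blockStart; ring
        _ ≤ ∑ k ∈ Finset.Iio b, nn k := Finset.sum_le_sum_of_subset hsub
    omega
  rcases lt_or_gt_of_ne hne with h1 | h1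
  · exact key _ _ h1 h h'
  · exact key _ _ h1 h' h

lemma exists_inBlock (q : Fin (∑ i, nn i)) : ∃ i, inBlock nn i (q : ℕ) := by
  rcases Nat.eq_zero_or_pos r with rfl | hr
  · exact absurd q.2 (by simp)
  classical
  set F := Finset.univ.filter (fun i : Fin r => blockStart nn i ≤ (q:ℕ)) with hF
  have h0 : (⟨0, hr⟩ : Fin r) ∈ F := by
    simp only [hF, Finset.mem_filter, Finset.mem_univ, true_and]
    have hIe : Finset.Iio (⟨0, hr⟩ : Fin r) = ∅ := by
      apply Finset.eq_empty_of_forall_notMem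
      intro k hk
      exact Nat.not_lt_zero _ (Fin.lt_def.mp (Finset.mem_Iio.mp hk))
    simp [blockStart, hIe]
  have hne : F.Nonempty := ⟨_, h0⟩
  set i := F.max' hne with hi
  have hile : blockStart nn i ≤ (q:ℕ) := by
    have := F.max'_mem hne
    simp only [hF, Finset.mem_filter] at this
    exact this.2
  refine ⟨i, hile, ?_⟩
  by_contra hq
  push_neg at hq
  by_cases hlast : (i : ℕ) + 1 < r
  · have hbs : blockStart nn ⟨(i:ℕ)+1, hlast⟩ = blockStart nn i + nn i := by
      have hIio : Finset.Iio (⟨(i:ℕ)+1, hlast⟩ : Fin r) = insert i (Finset.Iio i) := by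
        ext k
        simp only [Finset.mem_Iio, Finset.mem_insert, Fin.lt_def, Fin.ext_iff]
        omega
      unfold blockStart
      rw [hIio, Finset.sum_insert (by simp)]
      ring
    have hmemF : (⟨(i:ℕ)+1, hlast⟩ : Fin r) ∈ F := by
      simp only [hF, Finset.mem_filter, Finset.mem_univ, true_and]
      rw [hbs]; exact hq
    have hle := F.le_max' _ hmemF
    rw [← hi] at hle
    have h2 : (i:ℕ) + 1 ≤ (i:ℕ) := Fin.le_def.mp hle
    omega
  · have hsum : (∑ k, nn k) = blockStart nn i + nn i := by
      have huniv : (Finset.univ : Finset (Fin r)) = insert i (Finset.Iio i) := by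
        ext k
        simp only [Finset.mem_univ, true_iff, Finset.mem_insert, Finset.mem_Iio,
          Fin.lt_def, Fin.ext_iff]
        have := k.2
        have := i.2
        omega
      rw [huniv, Finset.sum_insert (by simp)]
      unfold blockStart; ring
    have := q.2
    omega

end Blocks

section PairingLemmas

variable {N : ℕ} (P : Pairing N)

lemma Pairing.leader_val_self (v : {i : Fin N // i < P.pair i}) : P.leader v.1 = v := by
  unfold Pairing.leader
  rw [dif_pos v.2]

lemma Pairing.leader_pair (q : Fin N) : P.leader (P.pair q) = P.leader q := by
  unfold Pairing.leader
  by_cases h : q < P.pair q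
  · rw [dif_pos h, dif_neg (by rw [P.involutive q]; exact not_lt.mpr h.le)]
    exact Subtype.ext (P.involutive q)
  · have h2 : P.pair q < q := lt_of_le_of_ne (not_lt.mp h) (P.fixedFree q)
    rw [dif_neg h, dif_pos (by rw [P.involutive q]; exact h2)]

lemma Pairing.leader_cases (q : Fin N) :
    (P.leader q : Fin N) = q ∨ (P.leader q : Fin N) = P.pair q := by
  unfold Pairing.leader
  by_cases h : q < P.pair q
  · rw [dif_pos h]; exact Or.inl rfl
  · rw [dif_neg h]; exact Or.inr rfl

lemma Pairing.leader_eq_leader {q q' : Fin N} (h : P.leader q' = P.leader q) :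
    q' = q ∨ q' = P.pair q := by
  have h1 := P.leader_cases q
  have h2 := P.leader_cases q'
  have hval : (P.leader q' : Fin N) = (P.leader q : Fin N) := by rw [h]
  rcases h1 with h1 | h1 <;> rcases h2 with h2 | h2
  · left; rw [← h2, hval, h1]
  · right; rw [← P.involutive q', ← h2, hval, h1]
  · right; rw [← h2, hval, h1]
  · left
    have h3 : P.pair q' = P.pair q := by rw [← h2, hval, h1]
    have h4 := congrArg P.pair h3
    rwa [P.involutive, P.involutive] at h4

end PairingLemmas

section Application

variable {r : ℕ} (nn : Fin r → ℕ)

/-- The coordinate-selection maps. -/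
def sigmaMap (P : Pairing (∑ i, nn i)) (i : Fin r) (j : Fin (nn i)) :
    {q : Fin (∑ i, nn i) // q < P.pair q} :=
  P.leader ⟨blockStart nn i + (j : ℕ), blockStart_lt nn i j⟩

variable (P : Pairing (∑ i, nn i)) (hP : Respects nn P)

lemma inBlock_offset (i : Fin r) (j : Fin (nn i)) :
    inBlock nn i (blockStart nn i + (j : ℕ)) :=
  ⟨Nat.le_add_right _ _, by have := j.2; omega⟩

include hP in
lemma sigmaMap_inj (i : Fin r) : Function.Injective (sigmaMap nn P i) := by
  intro j j' h
  unfold sigmaMap at h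
  rcases P.leader_eq_leader h with h1 | h1
  · have := Fin.ext_iff.mp h1
    simp only at this
    ext
    omega
  · exfalso
    have hb := inBlock_offset nn i j
    have hb' := inBlock_offset nn i j'
    have := hP ⟨blockStart nn i + (j : ℕ), blockStart_lt nn i j⟩ i hb
    apply this
    have : P.pair ⟨blockStart nn i + (j : ℕ), blockStart_lt nn i j⟩
        = ⟨blockStart nn i + (j' : ℕ), blockStart_lt nn i j'⟩ := by
      rw [h1, P.involutive]
    rw [this]
    exact hb'

lemma sigmaMap_eq_iff (i : Fin r) (j : Fin (nn i))
    (v : {q : Fin (∑ i, nn i) // q < P.pair q}) :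
    sigmaMap nn P i j = v ↔
      ((⟨blockStart nn i + (j : ℕ), blockStart_lt nn i j⟩ : Fin (∑ i, nn i)) = v.1 ∨
       (⟨blockStart nn i + (j : ℕ), blockStart_lt nn i j⟩ : Fin (∑ i, nn i)) = P.pair v.1) := by
  constructor
  · intro h
    have : P.leader ⟨blockStart nn i + (j : ℕ), blockStart_lt nn i j⟩ = P.leader v.1 := by
      rw [P.leader_val_self]; exact h
    exact P.leader_eq_leader this
  · rintro (h | h)
    · unfold sigmaMap
      rw [h, P.leader_val_self]
    · unfold sigmaMap
      rw [h, P.leader_pair, P.leader_val_self]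

/-- membership in the image set characterized by `inBlock`. -/
lemma exists_sigmaMap_iff (i : Fin r) (v : {q : Fin (∑ i, nn i) // q < P.pair q}) :
    (∃ j, sigmaMap nn P i j = v) ↔
      inBlock nn i ((v.1 : Fin (∑ i, nn i)) : ℕ) ∨ inBlock nn i ((P.pair v.1 : Fin (∑ i, nn i)) : ℕ) := by
  constructor
  · rintro ⟨j, hj⟩
    rcases (sigmaMap_eq_iff nn P i j v).mp hj with h | h
    · left
      have := Fin.ext_iff.mp h
      simp only at this
      rw [← this]
      exact inBlock_offset nn i j
    · right
      have := Fin.ext_iff.mp h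
      simp only at this
      rw [← this]
      exact inBlock_offset nn i j
  · rintro (⟨h1, h2⟩ | ⟨h1, h2⟩)
    · refine ⟨⟨(v.1 : ℕ) - blockStart nn i, by omega⟩, ?_⟩
      rw [sigmaMap_eq_iff]
      left
      ext
      simp only
      omega
    · refine ⟨⟨((P.pair v.1 : Fin (∑ i, nn i)) : ℕ) - blockStart nn i, by omega⟩, ?_⟩
      rw [sigmaMap_eq_iff]
      right
      ext
      simp only
      omega

include hP in
lemma count_two [DecidableEq (Fin r)]
    (v : {q : Fin (∑ i, nn i) // q < P.pair q}) :
    (Finset.univ.filter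
      (fun i => v ∈ Finset.image (sigmaMap nn P i) Finset.univ)).card = 2 := by
  obtain ⟨i₁, hi₁⟩ := exists_inBlock nn v.1
  obtain ⟨i₂, hi₂⟩ := exists_inBlock nn (P.pair v.1)
  have hne : i₁ ≠ i₂ := by
    intro h
    subst h
    exact hP v.1 i₁ hi₁ hi₂
  have hfilter : Finset.univ.filter
      (fun i => v ∈ Finset.image (sigmaMap nn P i) Finset.univ) = {i₁, i₂} := by
    ext i
    simp only [Finset.mem_filter, Finset.mem_univ, true_and, Finset.mem_image,
      Finset.mem_insert, Finset.mem_singleton]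
    rw [exists_sigmaMap_iff nn P i v]
    constructor
    · rintro (h | h)
      · left; exact inBlock_unique nn h hi₁
      · right; exact inBlock_unique nn h hi₂
    · rintro (rfl | rfl)
      · left; exact hi₁
      · right; exact hi₂
  rw [hfilter]
  rw [Finset.card_insert_of_notMem (by simpa using hne), Finset.card_singleton]

end Application

section Transfer

variable {V : Type*} [Fintype V] [DecidableEq V]

lemma pi_preimage_null {n : ℕ} (σ : Fin n → V) (hσ : Function.Injective σ)
    {A : Set (Fin n → ℝ)} (hA : (Measure.pi fun _ : Fin n => mplus) A = 0) :
    (Measure.pi fun _ : V => mplus) ((fun x : V → ℝ => fun j => x (σ j)) ⁻¹' A) = 0 := by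
  classical
  set μn : Measure (Fin n → ℝ) := Measure.pi fun _ => mplus with hμn
  set A' := toMeasurable μn A with hA'
  have hA'm : MeasurableSet A' := measurableSet_toMeasurable _ _
  have hA'0 : μn A' = 0 := by rw [hA', measure_toMeasurable]; exact hA
  suffices h : (Measure.pi fun _ : V => mplus) ((fun x : V → ℝ => fun j => x (σ j)) ⁻¹' A') = 0 by
    exact measure_mono_null (Set.preimage_mono (subset_toMeasurable _ _)) h
  set p : V → Prop := fun v => v ∈ Set.range σ with hp
  let e : Fin n ≃ {v // p v} := Equiv.ofInjective σ hσ
  let R : (Fin n → ℝ) ≃ᵐ ({v // p v} → ℝ) :=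
    MeasurableEquiv.piCongrLeft (fun _ => ℝ) e
  let E : (V → ℝ) ≃ᵐ ({v // p v} → ℝ) × ({v // ¬ p v} → ℝ) :=
    MeasurableEquiv.piEquivPiSubtypeProd (fun _ : V => ℝ) p
  have hT : (fun x : V → ℝ => fun j => x (σ j))
      = (fun x => R.symm ((E x).1)) := rfl
  rw [hT]
  have hpre : (fun x : V → ℝ => R.symm ((E x).1)) ⁻¹' A'
      = ⇑E ⁻¹' ((⇑R.symm ⁻¹' A') ×ˢ (Set.univ : Set ({v // ¬ p v} → ℝ))) := by
    ext x
    simp [Set.mem_prod]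
  rw [hpre]
  have hmpE := measurePreserving_piEquivPiSubtypeProd (fun _ : V => mplus) p
  rw [hmpE.measure_preimage_equiv]
  rw [Measure.prod_prod]
  have hmpR := (measurePreserving_piCongrLeft (fun _ : {v // p v} => mplus) e).symm
    (MeasurableEquiv.piCongrLeft (fun _ => ℝ) e)
  have hval : (Measure.pi fun _ : {v // p v} => mplus) (⇑R.symm ⁻¹' A') = μn A' :=
    hmpR.measure_preimage_equiv A'
  have hfin : (@Measure.pi (Subtype p) (fun _ => ℝ) (Subtype.fintype p)
      (fun _ => Real.measurableSpace) fun _ => mplus) (⇑R.symm ⁻¹' A') = 0 := by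
    have hpieq : (@Measure.pi (Subtype p) (fun _ => ℝ) (Set.fintypeRange σ)
          (fun _ => Real.measurableSpace) fun _ => mplus)
        = (@Measure.pi (Subtype p) (fun _ => ℝ) (Subtype.fintype p)
          (fun _ => Real.measurableSpace) fun _ => mplus) :=
      congrArg (fun i : Fintype (Subtype p) =>
        @Measure.pi (Subtype p) (fun _ => ℝ) i (fun _ => Real.measurableSpace) fun _ => mplus)
        (Subsingleton.elim (Set.fintypeRange σ) (Subtype.fintype p))
    rw [← hpieq, hval]
    exact hA'0
  rw [hfin, zero_mul]

lemma comp_eventuallyEq {n : ℕ} (σ : Fin n → V) (hσ : Function.Injective σ)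
    {F₁ F₂ : (Fin n → ℝ) → ℂ}
    (h : F₁ =ᵐ[Measure.pi fun _ : Fin n => mplus] F₂) :
    (fun x : V → ℝ => F₁ (fun j => x (σ j)))
      =ᵐ[Measure.pi fun _ : V => mplus] (fun x => F₂ (fun j => x (σ j))) := by
  have hnull : (Measure.pi fun _ : Fin n => mplus) {w | ¬ F₁ w = F₂ w} = 0 := ae_iff.mp h
  have h2 := pi_preimage_null σ hσ hnull
  exact ae_iff.mpr (measure_mono_null (fun x hx => hx) h2)

lemma lmarginal_image_norm {n : ℕ} (σ : Fin n → V) (hσ : Function.Injective σ)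
    (g : (Fin n → ℝ) → ℂ) (hg : Measurable g) (x : V → ℝ) :
    (∫⋯∫⁻_(Finset.image σ Finset.univ),
        (fun z => ((‖g (fun j => z (σ j))‖₊ : ℝ≥0∞)) ^ (2:ℝ)) ∂(fun _ => mplus)) x
      = ∫⁻ w, (‖g w‖₊ : ℝ≥0∞) ^ (2:ℝ) ∂(Measure.pi fun _ : Fin n => mplus) := by
  classical
  rw [lmarginal]
  set S := Finset.image σ Finset.univ with hS
  have hmem : ∀ j, σ j ∈ S := fun j => Finset.mem_image_of_mem σ (Finset.mem_univ j)
  have hupd : ∀ (y : ∀ _ : ↥S, ℝ) (j : Fin n),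
      updateFinset x S y (σ j) = y ⟨σ j, hmem j⟩ := by
    intro y j
    simp [updateFinset, hmem j]
  have hint : ∀ y : (∀ _ : ↥S, ℝ),
      (fun j => updateFinset x S y (σ j)) = (fun j => y ⟨σ j, hmem j⟩) := by
    intro y; funext j; exact hupd y j
  simp_rw [hint]
  have hbij : Function.Bijective (fun j : Fin n => (⟨σ j, hmem j⟩ : ↥S)) := by
    constructor
    · intro j j' hjj
      exact hσ (congrArg Subtype.val hjj)
    · rintro ⟨v, hv⟩
      rcases Finset.mem_image.mp hv with ⟨j, _, rfl⟩
      exact ⟨j, rfl⟩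
  let e : Fin n ≃ ↥S := Equiv.ofBijective _ hbij
  have hmp := measurePreserving_piCongrLeft (fun _ : ↥S => mplus) e
  have hFmeas : Measurable (fun y : (∀ _ : ↥S, ℝ) =>
      ((‖g (fun j => y ⟨σ j, hmem j⟩)‖₊ : ℝ≥0∞)) ^ (2:ℝ)) := by
    apply Measurable.pow_const
    apply Measurable.coe_nnreal_ennreal
    apply Measurable.nnnorm
    exact hg.comp (measurable_pi_lambda _ fun j => measurable_pi_apply _)
  rw [← hmp.lintegral_comp hFmeas]
  refine lintegral_congr fun w => ?_
  have harg : (fun j => (MeasurableEquiv.piCongrLeft (fun _ : ↥S => ℝ) e) w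
      (⟨σ j, hmem j⟩ : ↥S)) = w := by
    funext j
    have h1 : (⟨σ j, hmem j⟩ : ↥S) = e j := rfl
    rw [h1, MeasurableEquiv.coe_piCongrLeft]
    exact Equiv.piCongrLeft_apply_apply (fun _ : ↥S => ℝ) e w j
  rw [harg]

end Transfer

theorem stmt5 (r : ℕ) (nn : Fin r → ℕ) (hnn : ∀ i, 1 ≤ nn i)
    (f : (i : Fin r) → (Fin (nn i) → ℝ) → ℂ)
    (hf : ∀ i, MemLp (f i) 2 (Measure.pi fun _ : Fin (nn i) => mplus))
    (P : Pairing (∑ i, nn i)) (hP : Respects nn P) :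
    Integrable (fun x : ({i : Fin (∑ i, nn i) // i < P.pair i} → ℝ) =>
        tensorFam nn f (∑ i, nn i) (fun j => x (P.leader j)))
      (Measure.pi fun _ => mplus) ∧
    (‖pairingIntegral P (tensorFam nn f (∑ i, nn i))‖₊ : ℝ≥0∞) ≤
      ∏ i, eLpNorm (f i) 2 (Measure.pi fun _ : Fin (nn i) => mplus) := by
  classical
  -- measurable representatives
  choose g hgsm hgfg using fun i => (hf i).aestronglyMeasurable
  have hgm : ∀ i, Measurable (g i) := fun i => (hgsm i).measurable
  set V := {q : Fin (∑ i, nn i) // q < P.pair q} with hV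
  set μV : Measure (V → ℝ) := Measure.pi fun _ => mplus with hμV
  set σ : (i : Fin r) → Fin (nn i) → V := sigmaMap nn P with hσ
  set S : Fin r → Finset V := fun i => Finset.image (σ i) Finset.univ with hS
  set G : Fin r → (V → ℝ) → ℝ≥0∞ :=
    fun i x => (‖g i (fun j => x (σ i j))‖₊ : ℝ≥0∞) with hG
  have hσinj : ∀ i, Function.Injective (σ i) := fun i => sigmaMap_inj nn P hP i
  -- tensorFam rewriting
  have htensor : ∀ (h : (i : Fin r) → (Fin (nn i) → ℝ) → ℂ) (x : V → ℝ),
      tensorFam nn h (∑ i, nn i) (fun j => x (P.leader j))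
        = ∏ i, h i (fun j => x (σ i j)) := by
    intro h x
    unfold tensorFam
    refine Finset.prod_congr rfl fun i _ => ?_
    congr 1
    funext j
    rw [dif_pos (blockStart_lt nn i j)]
    rfl
  set F : (V → ℝ) → ℂ :=
    fun x => tensorFam nn f (∑ i, nn i) (fun j => x (P.leader j)) with hF
  set Fg : (V → ℝ) → ℂ := fun x => ∏ i, g i (fun j => x (σ i j)) with hFg
  -- a.e. equality
  have hae : F =ᵐ[μV] Fg := by
    have hcomp : ∀ i, (fun x : V → ℝ => f i (fun j => x (σ i j)))
        =ᵐ[μV] (fun x => g i (fun j => x (σ i j))) :=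
      fun i => comp_eventuallyEq (σ i) (hσinj i) (hgfg i)
    have hall : ∀ᵐ x ∂μV, ∀ i, f i (fun j => x (σ i j)) = g i (fun j => x (σ i j)) :=
      ae_all_iff.mpr hcomp
    filter_upwards [hall] with x hx
    rw [hF]
    simp only
    rw [htensor f x]
    exact Finset.prod_congr rfl fun i _ => hx i
  -- measurability of Fg and G
  have hGmeas : ∀ i, Measurable (G i) := by
    intro i
    apply Measurable.coe_nnreal_ennreal
    apply Measurable.nnnorm
    exact (hgm i).comp (measurable_pi_lambda _ fun j => measurable_pi_apply _)
  have hFgmeas : Measurable Fg := by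
    apply Finset.measurable_prod
    intro i _
    exact (hgm i).comp (measurable_pi_lambda _ fun j => measurable_pi_apply _)
  -- the product of G's is the norm of Fg
  have hnorm : ∀ x, (∏ i, G i x) = (‖Fg x‖₊ : ℝ≥0∞) := by
    intro x
    rw [hFg]
    simp only
    rw [nnnorm_prod, ENNReal.coe_finset_prod]
  -- norms of factors
  have hfac : ∀ i (x : V → ℝ),
      (∫⋯∫⁻_(S i), (fun z => (G i z) ^ (2:ℝ)) ∂(fun _ => mplus)) x
        = ∫⁻ w, (‖g i w‖₊ : ℝ≥0∞) ^ (2:ℝ) ∂(Measure.pi fun _ : Fin (nn i) => mplus) :=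
    fun i x => lmarginal_image_norm (σ i) (hσinj i) (g i) (hgm i) x
  have hsnorm : ∀ i,
      (∫⁻ w, (‖g i w‖₊ : ℝ≥0∞) ^ (2:ℝ) ∂(Measure.pi fun _ : Fin (nn i) => mplus)) ^ ((1:ℝ)/2)
        = eLpNorm (f i) 2 (Measure.pi fun _ : Fin (nn i) => mplus) := by
    intro i
    rw [eLpNorm_congr_ae (hgfg i)]
    rw [eLpNorm_eq_lintegral_rpow_enorm_toReal (by norm_num) (by norm_num)]
    norm_num
    rfl
  -- core bound
  have hcore := core_s5 (ι := Fin r) (V := V) Finset.univ S G hGmeas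
    (by
      intro i x y hxy
      rw [hG]
      simp only
      refine congrArg (fun w => ((‖g i w‖₊ : ℝ≥0∞))) (funext fun j => ?_)
      exact hxy _ (Finset.mem_image_of_mem _ (Finset.mem_univ j)))
    (fun i => Finset.subset_univ _)
    (fun v _ => count_two nn P hP v)
    (fun _ => 0)
  rw [lmarginal_univ] at hcore
  have hlint : ∫⁻ x, (‖Fg x‖₊ : ℝ≥0∞) ∂μV ≤ ∏ i, eLpNorm (f i) 2
      (Measure.pi fun _ : Fin (nn i) => mplus) := by
    calc ∫⁻ x, (‖Fg x‖₊ : ℝ≥0∞) ∂μV = ∫⁻ x, ∏ i, G i x ∂μV := by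
          refine lintegral_congr fun x => ?_
          rw [hnorm]
      _ ≤ ∏ i, ((∫⋯∫⁻_(S i), (fun z => (G i z) ^ (2:ℝ)) ∂(fun _ => mplus))
            (fun _ => 0)) ^ ((1:ℝ)/2) := hcore
      _ = ∏ i, eLpNorm (f i) 2 (Measure.pi fun _ : Fin (nn i) => mplus) := by
          refine Finset.prod_congr rfl fun i _ => ?_
          rw [hfac i, hsnorm i]
  have hlintF : ∫⁻ x, (‖F x‖₊ : ℝ≥0∞) ∂μV = ∫⁻ x, (‖Fg x‖₊ : ℝ≥0∞) ∂μV := by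
    refine lintegral_congr_ae ?_
    filter_upwards [hae] with x hx
    rw [hx]
  have hint : Integrable F μV := by
    constructor
    · exact (hFgmeas.stronglyMeasurable.aestronglyMeasurable).congr hae.symm
    · rw [hasFiniteIntegral_def]
      rw [show (∫⁻ a, ‖F a‖ₑ ∂μV) = ∫⁻ x, (‖F x‖₊ : ℝ≥0∞) ∂μV from rfl, hlintF]
      exact lt_of_le_of_lt hlint (ENNReal.prod_lt_top fun i _ => (hf i).2)
  refine ⟨hint, ?_⟩
  have hpi : pairingIntegral P (tensorFam nn f (∑ i, nn i)) = ∫ x, F x ∂μV := rfl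
  rw [hpi]
  calc (‖∫ x, F x ∂μV‖₊ : ℝ≥0∞) ≤ ∫⁻ x, (‖F x‖₊ : ℝ≥0∞) ∂μV :=
        enorm_integral_le_lintegral_enorm _
    _ = ∫⁻ x, (‖Fg x‖₊ : ℝ≥0∞) ∂μV := hlintF
    _ ≤ ∏ i, eLpNorm (f i) 2 (Measure.pi fun _ : Fin (nn i) => mplus) := hlint
end

section
/- Let n₁,…,n_r be positive integers and let π ∈ NC₂(n₁⊗⋯⊗n_r) be a noncrossing pairing respecting the interval partition n₁⊗⋯⊗n_r. Then there is a unique sequence of natural numbers (p₁,…,p_{r−1}) such that the composition of partial pairings τ_{p_{r−1}}∘⋯∘τ_{p₁} is defined and equals π. -/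
/-- Start index (0-based) of the `i`-th block of the interval partition given by `nn`. -/
def blockStartL (nn : List ℕ) (i : ℕ) : ℕ := (nn.take i).sum

/-- `j` (0-based) lies in the `i`-th block of the interval partition given by `nn`. -/
def inBlockL (nn : List ℕ) (i j : ℕ) : Prop :=
  i < nn.length ∧ blockStartL nn i ≤ j ∧ j < blockStartL nn i + nn.getD i 0

/-- The pairing respects the interval partition: no block of the pairing contains two
elements of the same interval block. -/
def RespectsL (nn : List ℕ) {N : ℕ} (P : Pairing N) : Prop :=
  ∀ j : Fin N, ∀ i : ℕ, inBlockL nn i (j : ℕ) → ¬ inBlockL nn i ((P.pair j : ℕ))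

/-- One step of the action of the partial pairing `τ_p`.  The state consists of the list `L` of
currently unpaired indices (in the order of the merged first block), the list of pairs produced
so far, and the start position of the next block.  The step takes the next block (of size `mp.1`)
and pairs its first `mp.2` elements with the last `mp.2` elements of `L` in nested fashion. -/
def tauStep (st : List ℕ × List (ℕ × ℕ) × ℕ) (mp : ℕ × ℕ) : List ℕ × List (ℕ × ℕ) × ℕ :=
  (st.1.take (st.1.length - mp.2) ++ (List.range' st.2.2 mp.1).drop mp.2,
   st.2.1 ++ (st.1.drop (st.1.length - mp.2)).reverse.zip ((List.range' st.2.2 mp.1).take mp.2),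
   st.2.2 + mp.1)

/-- Run the composition `τ_{p_{r-1}} ∘ ⋯ ∘ τ_{p_1}`, where the first block has size `n0` and
`steps` is the list of pairs `(n_{k+1}, p_k)`. -/
def tauRun (n0 : ℕ) (steps : List (ℕ × ℕ)) : List ℕ × List (ℕ × ℕ) × ℕ :=
  steps.foldl tauStep (List.range n0, [], n0)

/-- The composition of partial pairings is defined: at each step, `p_k` is at most the minimum
of the sizes of the two blocks it acts on. -/
def tauDefinedAux : ℕ → List (ℕ × ℕ) → Prop
  | _, [] => True
  | len, (m, p) :: rest => p ≤ len ∧ p ≤ m ∧ tauDefinedAux (len - p + (m - p)) rest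

/-- The pairing determined by the composition of partial pairings equals `P`. -/
def TauEqualsPairing (n0 : ℕ) (steps : List (ℕ × ℕ)) {N : ℕ} (P : Pairing N) : Prop :=
  ∀ i : Fin N, ((i : ℕ), (P.pair i : ℕ)) ∈ (tauRun n0 steps).2.1 ∨
    ((P.pair i : ℕ), (i : ℕ)) ∈ (tauRun n0 steps).2.1


private def mkPs (f : ℕ → ℕ) : ℕ → List ℕ → List ℕ
  | _, [] => []
  | s, m :: rest => (List.range' s m).countP (fun x => decide (f x < x)) :: mkPs f (s + m) rest

private def BlocksResp (f : ℕ → ℕ) : ℕ → List ℕ → Prop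
  | _, [] => True
  | s, m :: rest => (∀ x, s ≤ x → x < s + m → f x < s ∨ s + m ≤ f x) ∧ BlocksResp f (s + m) rest

private lemma mkPs_length (f : ℕ → ℕ) : ∀ (rest : List ℕ) (s : ℕ), (mkPs f s rest).length = rest.length
  | [], _ => rfl
  | m :: rest, s => by simp [mkPs, mkPs_length f rest]

private lemma range'_split {s m p : ℕ} (h : p ≤ m) :
    List.range' s m = List.range' s p ++ List.range' (s + p) (m - p) := by
  have h2 := List.range'_append (s := s) (m := p) (n := m - p) (step := 1)
  simp only [one_mul] at h2
  rw [show p + (m - p) = m by omega] at h2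
  exact h2.symm

private lemma range'_take {s m p : ℕ} (h : p ≤ m) :
    (List.range' s m).take p = List.range' s p := by
  rw [range'_split h, List.take_left' (by simp)]

private lemma range'_drop {s m p : ℕ} (h : p ≤ m) :
    (List.range' s m).drop p = List.range' (s + p) (m - p) := by
  rw [range'_split h, List.drop_left' (by simp)]

private lemma initseg (g : ℕ → Bool) :
    ∀ (m s : ℕ), (∀ x y, s ≤ x → x ≤ y → y < s + m → g y = true → g x = true) →
      (List.range' s m).filter g = List.range' s ((List.range' s m).countP g)
  | 0, s, _ => by simp
  | (m+1), s, hdc => by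
    by_cases hg : g (s + m) = true
    · have hall : ∀ a ∈ List.range' s (m+1), g a = true := by
        intro a ha
        rw [List.mem_range'_1] at ha
        exact hdc a (s+m) ha.1 (by omega) (by omega) hg
      rw [List.filter_eq_self.2 hall, List.countP_eq_length.2 hall, List.length_range']
    · rw [List.range'_concat, one_mul, List.filter_append, List.countP_append]
      have h2 : List.filter g [s+m] = [] := by simp [hg]
      have h3 : List.countP g [s+m] = 0 := by simp [hg]
      rw [h2, h3, List.append_nil, Nat.add_zero]
      exact initseg g m s (fun x y hx hxy hy hgy => hdc x y hx hxy (by omega) hgy)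
private lemma core_s6 (N : ℕ) (f : ℕ → ℕ)
    (hinv : ∀ x, x < N → f (f x) = x) (hlt : ∀ x, x < N → f x < N)
    (hnc : ∀ i j, i < N → j < N → i < j → j < f i → f i < f j → False)
    (s m : ℕ) (hsm : s + m ≤ N)
    (hb : ∀ x, s ≤ x → x < s + m → f x < s ∨ s + m ≤ f x) :
    (List.range' s m).filter (fun x => decide (f x < x))
      = List.range' s ((List.range' s m).countP (fun x => decide (f x < x))) ∧
    (∀ x, s + ((List.range' s m).countP (fun x => decide (f x < x))) ≤ x → x < s + m → s + m ≤ f x) ∧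
    ((List.range s).filter (fun x => decide (s ≤ f x))).take
        (((List.range s).filter (fun x => decide (s ≤ f x))).length
          - (List.range' s m).countP (fun x => decide (f x < x)))
      ++ (List.range' s m).drop ((List.range' s m).countP (fun x => decide (f x < x)))
      = (List.range (s + m)).filter (fun x => decide (s + m ≤ f x)) ∧
    (((List.range s).filter (fun x => decide (s ≤ f x))).drop
        (((List.range s).filter (fun x => decide (s ≤ f x))).length
          - (List.range' s m).countP (fun x => decide (f x < x)))).reverse.zip
        ((List.range' s m).take ((List.range' s m).countP (fun x => decide (f x < x))))
      = ((List.range' s m).filter (fun x => decide (f x < x))).map (fun x => (f x, x)) ∧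
    (List.range' s m).countP (fun x => decide (f x < x))
      ≤ ((List.range s).filter (fun x => decide (s ≤ f x))).length ∧
    (List.range' s m).countP (fun x => decide (f x < x)) ≤ m := by
  set g : ℕ → Bool := fun x => decide (f x < x) with hg
  set p : ℕ := (List.range' s m).countP g with hp
  set L : List ℕ := (List.range s).filter (fun x => decide (s ≤ f x)) with hL
  have hinj : ∀ a b, a < N → b < N → f a = f b → a = b := by
    intro a b ha hb' h
    rw [← hinv a ha, h, hinv b hb']
  have hpm : p ≤ m := le_trans (List.countP_le_length (p := g)) (by simp)
  -- downward closedness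
  have hdc : ∀ x y, s ≤ x → x ≤ y → y < s + m → g y = true → g x = true := by
    intro x y hx hxy hy hgy
    simp only [hg, decide_eq_true_eq] at hgy ⊢
    rcases eq_or_lt_of_le hxy with rfl | hxy'
    · exact hgy
    by_contra hnx
    have hxN : x < N := by omega
    have hyN : y < N := by omega
    have hfy_lt_s : f y < s := by
      rcases hb y (by omega) hy with h | h
      · exact h
      · omega
    have hfx : s + m ≤ f x := by
      rcases hb x hx (by omega) with h | h
      · omega
      · exact h
    exact hnc (f y) x (hlt y hyN) hxN (by omega) (by rw [hinv y hyN]; omega)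
      (by rw [hinv y hyN]; omega)
  have hfilter : (List.range' s m).filter g = List.range' s p := initseg g m s hdc
  -- members of range' s p are left-pairers
  have hps : ∀ x ∈ List.range' s p, f x < s ∧ s ≤ x ∧ x < s + p := by
    intro x hx
    have hx' := hx
    rw [← hfilter, List.mem_filter] at hx'
    obtain ⟨hxm, hgx⟩ := hx'
    rw [List.mem_range'_1] at hxm hx
    simp only [hg, decide_eq_true_eq] at hgx
    refine ⟨?_, hx.1, hx.2⟩
    rcases hb x hxm.1 hxm.2 with h | h
    · exact h
    · omega
  -- right-pairers
  have hright : ∀ x, s + p ≤ x → x < s + m → s + m ≤ f x := by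
    intro x hx1 hx2
    have hnotmem : x ∉ List.range' s p := by
      rw [List.mem_range'_1]; omega
    have hng : ¬ (f x < x) := by
      intro hfx
      apply hnotmem
      rw [← hfilter, List.mem_filter]
      refine ⟨by rw [List.mem_range'_1]; omega, ?_⟩
      simp only [hg, decide_eq_true_eq]
      exact hfx
    rcases hb x (by omega) hx2 with h | h
    · omega
    · exact h
  set Q : List ℕ := ((List.range' s p).map f).reverse with hQ
  have hQmem : ∀ y, y ∈ Q ↔ ∃ x ∈ List.range' s p, f x = y := by
    intro y; simp [hQ]
  have hQprop : ∀ y ∈ Q, y < s ∧ s ≤ f y ∧ f y < s + m := by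
    intro y hy
    rw [hQmem] at hy
    obtain ⟨x, hx, rfl⟩ := hy
    obtain ⟨h1, h2, h3⟩ := hps x hx
    have hxN : x < N := by omega
    rw [hinv x hxN]
    exact ⟨h1, h2, by omega⟩
  have hLmem : ∀ y, y ∈ L ↔ y < s ∧ s ≤ f y := by
    intro y
    rw [hL, List.mem_filter, List.mem_range]
    simp only [decide_eq_true_eq]
  have hQL : ∀ y ∈ Q, y ∈ L := by
    intro y hy
    rw [hLmem]
    exact ⟨(hQprop y hy).1, (hQprop y hy).2.1⟩
  have hpartner : ∀ y ∈ L, f y < s + m → y ∈ Q := by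
    intro y hy hfy
    rw [hLmem] at hy
    have hyN : y < N := by omega
    have hz : f y ∈ List.range' s p := by
      rw [← hfilter, List.mem_filter]
      constructor
      · rw [List.mem_range'_1]; exact ⟨hy.2, hfy⟩
      · simp only [hg, decide_eq_true_eq]
        rw [hinv y hyN]; omega
    rw [hQmem]
    exact ⟨f y, hz, hinv y hyN⟩
  have hcross : ∀ x ∈ L, s + m ≤ f x → ∀ y ∈ Q, x < y := by
    intro x hx hfx y hy
    rw [hLmem] at hx
    obtain ⟨hy1, hy2, hy3⟩ := hQprop y hy
    by_contra hxy
    push_neg at hxy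
    have hxN : x < N := by omega
    have hyN : y < N := by omega
    rcases eq_or_lt_of_le hxy with rfl | hyx
    · omega
    · exact hnc y x hyN hxN hyx (by omega) (by omega)
  have hQsorted : Q.Pairwise (· < ·) := by
    rw [hQ, List.pairwise_reverse, List.pairwise_map]
    refine List.Pairwise.imp_of_mem ?_ (List.pairwise_lt_range' (s := s) (n := p))
    intro a b ha hb' hab
    obtain ⟨ha1, ha2, ha3⟩ := hps a ha
    obtain ⟨hb1, hb2, hb3⟩ := hps b hb'
    have haN : a < N := by omega
    have hbN : b < N := by omega
    have hne : f a ≠ f b := fun h => by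
      have := hinj a b haN hbN h
      omega
    rcases Nat.lt_trichotomy (f a) (f b) with h | h | h
    · exact (hnc (f a) (f b) (hlt a haN) (hlt b hbN) h
        (by rw [hinv a haN]; omega) (by rw [hinv a haN, hinv b hbN]; omega)).elim
    · exact absurd h hne
    · exact h
  have hLsorted : L.Pairwise (· < ·) := by
    rw [hL]
    exact List.Pairwise.sublist List.filter_sublist (List.pairwise_lt_range (n := s))
  have hQnodup : Q.Nodup := hQsorted.imp (fun h => Nat.ne_of_lt h)
  set A : List ℕ := L.filter (fun x => decide (s + m ≤ f x)) with hA
  set Qs : List ℕ := L.filter (fun x => decide (f x < s + m)) with hQs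
  have hQsmem : ∀ y, y ∈ Qs ↔ (y ∈ L ∧ f y < s + m) := by
    intro y; rw [hQs, List.mem_filter]; simp
  have hQsQ : Qs = Q := by
    have hQs_sorted : Qs.Pairwise (· < ·) :=
      List.Pairwise.sublist List.filter_sublist hLsorted
    have hQs_nodup : Qs.Nodup := hQs_sorted.imp (fun h => Nat.ne_of_lt h)
    refine List.Perm.eq_of_pairwise (fun a b _ _ h1 h2 => absurd h2 (Nat.lt_asymm h1)) hQs_sorted hQsorted ?_
    refine List.perm_of_nodup_nodup_toFinset_eq hQs_nodup hQnodup ?_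
    ext y
    simp only [List.mem_toFinset]
    rw [hQsmem]
    constructor
    · rintro ⟨h1, h2⟩
      exact hpartner y h1 h2
    · intro h
      exact ⟨hQL y h, (hQprop y h).2.2⟩
  have hLsplit : L = A ++ Qs := by
    have hperm : (A ++ Qs).Perm L := by
      have h1 : Qs = L.filter (fun x => !(decide (s + m ≤ f x))) := by
        rw [hQs]
        apply List.filter_congr
        intro x _
        by_cases h : s + m ≤ f x <;> simp [h] <;> omega
      rw [hA, h1]
      exact List.filter_append_perm _ L
    haveI : IsAntisymm ℕ (· < ·) := ⟨fun a b h1 h2 => absurd h2 (Nat.lt_asymm h1)⟩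
    refine (List.Perm.eq_of_pairwise (fun a b _ _ h1 h2 => absurd h2 (Nat.lt_asymm h1)) ?_ hLsorted hperm).symm
    rw [List.pairwise_append]
    refine ⟨List.Pairwise.sublist List.filter_sublist hLsorted,
      List.Pairwise.sublist List.filter_sublist hLsorted, ?_⟩
    intro x hx y hy
    rw [hA, List.mem_filter] at hx
    rw [hQsQ] at hy
    refine hcross x hx.1 ?_ y hy
    have := hx.2
    simp only [decide_eq_true_eq] at this
    exact this
  have hQlen : Q.length = p := by simp [hQ]
  have hLlen : L.length = A.length + p := by
    rw [hLsplit, List.length_append, hQsQ, hQlen]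
  have hpL : p ≤ L.length := by omega
  have htake : L.take (L.length - p) = A := by
    rw [show L.length - p = A.length by omega, hLsplit, List.take_left]
  have hdrop : L.drop (L.length - p) = Q := by
    rw [show L.length - p = A.length by omega, hLsplit, List.drop_left, hQsQ]
  have hnewL : L.take (L.length - p) ++ (List.range' s m).drop p
      = (List.range (s + m)).filter (fun x => decide (s + m ≤ f x)) := by
    rw [htake, range'_drop hpm]
    have hrsplit : List.range (s + m) = List.range s ++ List.range' s m := by
      rw [List.range_eq_range', List.range_eq_range']
      have h2 := List.range'_append (s := 0) (m := s) (n := m) (step := 1)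
      simp only [one_mul, Nat.zero_add] at h2
      rw [← h2]
    rw [hrsplit, List.filter_append]
    congr 1
    · rw [hA, hL, List.filter_filter]
      apply List.filter_congr
      intro x hx
      rw [List.mem_range] at hx
      by_cases h : s + m ≤ f x
      · have h' : s ≤ f x := by omega
        simp [h, h']
      · simp [h]
    · rw [range'_split hpm, List.filter_append]
      have h1 : (List.range' s p).filter (fun x => decide (s + m ≤ f x)) = [] := by
        rw [List.filter_eq_nil_iff]
        intro a ha
        obtain ⟨h1', h2', h3'⟩ := hps a ha
        simp only [decide_eq_true_eq]
        omega
      have h2 : (List.range' (s+p) (m-p)).filter (fun x => decide (s + m ≤ f x))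
          = List.range' (s+p) (m-p) := by
        rw [List.filter_eq_self]
        intro a ha
        rw [List.mem_range'_1] at ha
        simp only [decide_eq_true_eq]
        exact hright a ha.1 (by omega)
      rw [h1, h2, List.nil_append]
  have hpairs : (L.drop (L.length - p)).reverse.zip ((List.range' s m).take p)
      = ((List.range' s m).filter g).map (fun x => (f x, x)) := by
    rw [hdrop, hQ, List.reverse_reverse, range'_take hpm, hfilter]
    have hzm := List.zip_map' (f := f) (g := id) (l := List.range' s p)
    rw [List.map_id] at hzm
    rw [hzm]
    simp [id_eq]
  exact ⟨hfilter, hright, hnewL, hpairs, hpL, hpm⟩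
private lemma master (N : ℕ) (f : ℕ → ℕ)
    (hinv : ∀ x, x < N → f (f x) = x) (hlt : ∀ x, x < N → f x < N)
    (hnc : ∀ i j, i < N → j < N → i < j → j < f i → f i < f j → False) :
    ∀ (rest : List ℕ) (s : ℕ), s + rest.sum = N → BlocksResp f s rest →
      tauDefinedAux ((List.range s).filter (fun x => decide (s ≤ f x))).length
        (rest.zip (mkPs f s rest)) ∧
      ∀ PR : List (ℕ × ℕ),
        List.foldl tauStep ((List.range s).filter (fun x => decide (s ≤ f x)), PR, s)
          (rest.zip (mkPs f s rest)) =
        ((List.range N).filter (fun x => decide (N ≤ f x)),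
         PR ++ ((List.range' s rest.sum).filter (fun x => decide (f x < x))).map
           (fun x => (f x, x)), N)
  | [], s, hsum, _ => by
    simp only [List.sum_nil, Nat.add_zero] at hsum
    subst hsum
    refine ⟨trivial, ?_⟩
    intro PR
    simp [mkPs]
  | m :: rest, s, hsum, hbr => by
    obtain ⟨hb, hbr'⟩ := hbr
    have hsm : s + m ≤ N := by simp only [List.sum_cons] at hsum; omega
    obtain ⟨hfilter, hright, hnewL, hpairs, hpL, hpm⟩ := core_s6 N f hinv hlt hnc s m hsm hb
    have IH := master N f hinv hlt hnc rest (s + m)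
      (by simp only [List.sum_cons] at hsum; omega) hbr'
    set p := (List.range' s m).countP (fun x => decide (f x < x)) with hp
    set L := (List.range s).filter (fun x => decide (s ≤ f x)) with hL
    have hstep : ∀ PR : List (ℕ × ℕ), tauStep (L, PR, s) (m, p)
        = ((List.range (s+m)).filter (fun x => decide (s + m ≤ f x)),
           PR ++ ((List.range' s m).filter (fun x => decide (f x < x))).map (fun x => (f x, x)),
           s + m) := by
      intro PR
      simp only [tauStep]
      rw [hnewL, hpairs]
    have hlen' : ((List.range (s+m)).filter (fun x => decide (s + m ≤ f x))).length
        = L.length - p + (m - p) := by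
      rw [← hnewL, List.length_append, List.length_take, List.length_drop, List.length_range']
      omega
    have hmk : mkPs f s (m :: rest) = p :: mkPs f (s+m) rest := rfl
    have hzip : (m :: rest).zip (mkPs f s (m :: rest))
        = (m, p) :: rest.zip (mkPs f (s+m) rest) := by rw [hmk]; rfl
    constructor
    · rw [hzip]
      refine ⟨hpL, hpm, ?_⟩
      have := IH.1
      rw [hlen'] at this
      exact this
    · intro PR
      rw [hzip, List.foldl_cons, hstep PR, IH.2]
      have hsplit2 : List.range' s ((m :: rest).sum)
          = List.range' s m ++ List.range' (s + m) rest.sum := by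
        rw [List.sum_cons, range'_split (show m ≤ m + rest.sum by omega)]
        congr 2
        omega
      rw [hsplit2, List.filter_append, List.map_append, List.append_assoc]

private lemma foldl_split : ∀ (steps : List (ℕ × ℕ)) (st : List ℕ × List (ℕ × ℕ) × ℕ),
    List.foldl tauStep st steps =
      ((List.foldl tauStep (st.1, [], st.2.2) steps).1,
       st.2.1 ++ (List.foldl tauStep (st.1, [], st.2.2) steps).2.1,
       (List.foldl tauStep (st.1, [], st.2.2) steps).2.2)
  | [], st => by simp
  | a :: steps, ⟨L, PR, c⟩ => by
    rw [List.foldl_cons, List.foldl_cons]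
    rw [foldl_split steps (tauStep (L, PR, c) a), foldl_split steps (tauStep (L, [], c) a)]
    have h1 : (tauStep (L, PR, c) a).1 = (tauStep (L, [], c) a).1 := rfl
    have h2 : (tauStep (L, PR, c) a).2.2 = (tauStep (L, [], c) a).2.2 := rfl
    have h3 : (tauStep (L, PR, c) a).2.1 = PR ++ (tauStep (L, [], c) a).2.1 := by
      simp [tauStep]
    rw [h1, h2, h3, List.append_assoc]

private lemma foldl_facts : ∀ (steps : List (ℕ × ℕ)) (st : List ℕ × List (ℕ × ℕ) × ℕ),
    (∀ x ∈ st.1, x < st.2.2) →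
    ∀ pr ∈ (List.foldl tauStep st steps).2.1,
      pr ∈ st.2.1 ∨ (pr.1 < pr.2 ∧ st.2.2 ≤ pr.2 ∧ (pr.1 ∈ st.1 ∨ st.2.2 ≤ pr.1))
  | [], st => by intro _ pr hpr; exact Or.inl hpr
  | ⟨m, q⟩ :: steps, ⟨L, PR, c⟩ => by
    intro hLlt pr hpr
    simp only at hLlt
    show pr ∈ PR ∨ (pr.1 < pr.2 ∧ c ≤ pr.2 ∧ (pr.1 ∈ L ∨ c ≤ pr.1))
    rw [List.foldl_cons] at hpr
    have hL' : ∀ x ∈ (tauStep (L, PR, c) (m, q)).1, x < (tauStep (L, PR, c) (m, q)).2.2 := by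
      intro x hx
      simp only [tauStep] at hx ⊢
      rcases List.mem_append.1 hx with h | h
      · have := hLlt x (List.mem_of_mem_take h)
        omega
      · have := List.mem_range'_1.1 (List.mem_of_mem_drop h)
        omega
    rcases foldl_facts steps (tauStep (L, PR, c) (m, q)) hL' pr hpr with h | ⟨h1, h2, h3⟩
    · simp only [tauStep, List.mem_append] at h
      rcases h with h | h
      · exact Or.inl h
      · right
        obtain ⟨hfst, hsnd⟩ := List.of_mem_zip (show (pr.1, pr.2) ∈ _ from by simpa using h)
        rw [List.mem_reverse] at hfst
        have hfst' : pr.1 ∈ L := List.mem_of_mem_drop hfst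
        have hsnd' := List.mem_range'_1.1 (List.mem_of_mem_take hsnd)
        have := hLlt pr.1 hfst'
        exact ⟨by omega, by omega, Or.inl hfst'⟩
    · right
      have hstart : (tauStep (L, PR, c) (m, q)).2.2 = c + m := rfl
      rw [hstart] at h2
      refine ⟨h1, by omega, ?_⟩
      rcases h3 with h | h
      · simp only [tauStep] at h
        rcases List.mem_append.1 h with h' | h'
        · exact Or.inl (List.mem_of_mem_take h')
        · have := List.mem_range'_1.1 (List.mem_of_mem_drop h')
          exact Or.inr (by omega)
      · rw [hstart] at h
        exact Or.inr (by omega)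
private lemma uniq (N : ℕ) (f : ℕ → ℕ)
    (hinv : ∀ x, x < N → f (f x) = x) (hlt : ∀ x, x < N → f x < N)
    (hnc : ∀ i j, i < N → j < N → i < j → j < f i → f i < f j → False) :
    ∀ (rest ps' : List ℕ) (s : ℕ), s + rest.sum = N → BlocksResp f s rest →
      ps'.length = rest.length →
      tauDefinedAux ((List.range s).filter (fun x => decide (s ≤ f x))).length (rest.zip ps') →
      (∀ i, i < N → f i < i → s ≤ i →
        (f i, i) ∈ (List.foldl tauStep
          ((List.range s).filter (fun x => decide (s ≤ f x)), [], s) (rest.zip ps')).2.1) →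
      ps' = mkPs f s rest
  | [], ps', s, _, _, hlen, _, _ => by
    rw [List.length_nil, List.length_eq_zero_iff] at hlen
    rw [hlen]; rfl
  | m :: rest, ps', s, hsum, hbr, hlen, hdef, hmem => by
    obtain ⟨q, ps₂, rfl⟩ : ∃ q ps₂, ps' = q :: ps₂ := by
      cases ps' with
      | nil => simp at hlen
      | cons a l => exact ⟨a, l, rfl⟩
    obtain ⟨hb, hbr'⟩ := hbr
    have hsm : s + m ≤ N := by simp only [List.sum_cons] at hsum; omega
    obtain ⟨hfilter, hright, hnewL, hpairs, hpL, hpm⟩ := core_s6 N f hinv hlt hnc s m hsm hb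
    set p := (List.range' s m).countP (fun x => decide (f x < x)) with hp
    set L := (List.range s).filter (fun x => decide (s ≤ f x)) with hL
    have hdef' : q ≤ L.length ∧ q ≤ m ∧ tauDefinedAux (L.length - q + (m - q)) (rest.zip ps₂) :=
      hdef
    obtain ⟨hqL, hqm, hdef₂⟩ := hdef'
    have hzip : (m :: rest).zip (q :: ps₂) = (m, q) :: rest.zip ps₂ := rfl
    have hstep1 : tauStep (L, ([] : List (ℕ × ℕ)), s) (m, q)
        = (L.take (L.length - q) ++ (List.range' s m).drop q,
           (L.drop (L.length - q)).reverse.zip (List.range' s q), s + m) := by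
      simp only [tauStep]
      rw [range'_take hqm]
      simp
    have hrunpairs : ∀ pr : ℕ × ℕ,
        pr ∈ (List.foldl tauStep (L, ([] : List (ℕ × ℕ)), s) ((m :: rest).zip (q :: ps₂))).2.1 ↔
        (pr ∈ (L.drop (L.length - q)).reverse.zip (List.range' s q) ∨
         pr ∈ (List.foldl tauStep (L.take (L.length - q) ++ (List.range' s m).drop q,
            ([] : List (ℕ × ℕ)), s + m) (rest.zip ps₂)).2.1) := by
      intro pr
      rw [hzip, List.foldl_cons, hstep1, foldl_split (rest.zip ps₂) _]
      simp [List.mem_append]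
    have hL1lt : ∀ x ∈ L.take (L.length - q) ++ (List.range' s m).drop q, x < s + m := by
      intro x hx
      rcases List.mem_append.1 hx with h | h
      · have h2 := List.mem_of_mem_take h
        rw [hL, List.mem_filter] at h2
        have h3 := h2.1
        rw [List.mem_range] at h3
        omega
      · have := List.mem_range'_1.1 (List.mem_of_mem_drop h)
        omega
    have hZ : ∀ a b : ℕ, (a, b) ∈ (L.drop (L.length - q)).reverse.zip (List.range' s q) →
        a < s ∧ s ≤ b ∧ b < s + q := by
      intro a b hab
      obtain ⟨ha, hb'⟩ := List.of_mem_zip hab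
      rw [List.mem_reverse] at ha
      have haL := List.mem_of_mem_drop ha
      rw [hL, List.mem_filter] at haL
      have ha2 := haL.1
      rw [List.mem_range] at ha2
      have hb2 := List.mem_range'_1.1 hb'
      exact ⟨ha2, by omega, by omega⟩
    have hpq : p ≤ q := by
      rcases Nat.eq_zero_or_pos p with h0 | h0
      · omega
      have hip : s + (p - 1) ∈ List.range' s p := by rw [List.mem_range'_1]; omega
      have hfi : f (s + (p - 1)) < s + (p - 1) := by
        rw [← hfilter, List.mem_filter] at hip
        simpa using hip.2
      have hiN : s + (p - 1) < N := by omega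
      have hm := hmem (s + (p - 1)) hiN hfi (by omega)
      rw [hrunpairs] at hm
      rcases hm with h | h
      · have := (hZ _ _ h).2.2
        omega
      · rcases foldl_facts (rest.zip ps₂) _ hL1lt _ h with h' | ⟨_, h2, _⟩
        · have h'' : ((f (s + (p-1)), s + (p-1)) : ℕ × ℕ) ∈ ([] : List (ℕ × ℕ)) := h'
          simp at h''
        · have h2' : s + m ≤ ((f (s + (p-1)), s + (p-1)) : ℕ × ℕ).2 := h2
          simp only at h2'
          omega
    have hqp : q ≤ p := by
      by_contra hgt
      push_neg at hgt
      have hiN : s + p < N := by omega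
      have hfi : s + m ≤ f (s + p) := hright (s + p) (by omega) (by omega)
      have hfiN : f (s + p) < N := hlt _ hiN
      have hffi : f (f (s + p)) = s + p := hinv _ hiN
      have hm := hmem (f (s + p)) hfiN (by rw [hffi]; omega) (by omega)
      rw [hffi, hrunpairs] at hm
      rcases hm with h | h
      · have := (hZ _ _ h).2
        omega
      · rcases foldl_facts (rest.zip ps₂) _ hL1lt _ h with h' | ⟨_, _, h3⟩
        · have h'' : ((s + p, f (s + p)) : ℕ × ℕ) ∈ ([] : List (ℕ × ℕ)) := h'
          simp at h''
        · rcases h3 with h' | h'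
          · have h'' : s + p ∈ L.take (L.length - q) ++ (List.range' s m).drop q := h'
            rcases List.mem_append.1 h'' with hx | hx
            · have h2 := List.mem_of_mem_take hx
              rw [hL, List.mem_filter] at h2
              have h3' := h2.1
              rw [List.mem_range] at h3'
              omega
            · rw [range'_drop hqm] at hx
              have := List.mem_range'_1.1 hx
              omega
          · have h'' : s + m ≤ ((s + p, f (s + p)) : ℕ × ℕ).1 := h'
            simp only at h''
            omega
    have hq : q = p := le_antisymm hqp hpq
    subst hq
    have hlenL1 : ((List.range (s + m)).filter (fun x => decide (s + m ≤ f x))).length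
        = L.length - p + (m - p) := by
      rw [← hnewL, List.length_append, List.length_take, List.length_drop, List.length_range']
      omega
    have IH := uniq N f hinv hlt hnc rest ps₂ (s + m)
      (by simp only [List.sum_cons] at hsum; omega) hbr'
      (by simpa using hlen)
      (by rw [hlenL1]; exact hdef₂)
      (by
        intro i hiN hfi hsi
        have hm := hmem i hiN hfi (by omega)
        rw [hrunpairs] at hm
        rcases hm with h | h
        · have := (hZ _ _ h).2.2
          omega
        · rw [hnewL] at h
          exact h)
    rw [IH]
    rfl
private lemma BR_of (f : ℕ → ℕ) : ∀ (rest : List ℕ) (s : ℕ),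
    (∀ k, k < rest.length → ∀ x, s + (rest.take k).sum ≤ x →
      x < s + (rest.take k).sum + rest.getD k 0 →
      f x < s + (rest.take k).sum ∨ s + (rest.take k).sum + rest.getD k 0 ≤ f x) →
    BlocksResp f s rest
  | [], _, _ => trivial
  | m :: rest, s, h => by
    constructor
    · intro x hx1 hx2
      have := h 0 (by simp) x (by simpa using hx1) (by simpa using hx2)
      simpa using this
    · apply BR_of f rest (s + m)
      intro k hk x hx1 hx2
      have h1 : s + ((m :: rest).take (k + 1)).sum = s + m + (rest.take k).sum := by
        rw [List.take_succ_cons, List.sum_cons]; omega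
      have h3 : (m :: rest).getD (k + 1) 0 = rest.getD k 0 := rfl
      have h2 := h (k + 1) (by simpa using hk) x (by rw [h1]; exact hx1)
        (by rw [h1, h3]; exact hx2)
      rw [h1, h3] at h2
      exact h2

theorem stmt6 (n0 : ℕ) (ns : List ℕ) (hn0 : 1 ≤ n0) (hns : ∀ m ∈ ns, 1 ≤ m)
    (P : Pairing ((n0 :: ns).sum)) (hnc : P.IsNoncrossing) (hresp : RespectsL (n0 :: ns) P) :
    ∃! ps : List ℕ, ps.length = ns.length ∧
      tauDefinedAux n0 (ns.zip ps) ∧ TauEqualsPairing n0 (ns.zip ps) P := by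
  classical
  set f : ℕ → ℕ := fun x =>
    if h : x < (n0 :: ns).sum then ((P.pair ⟨x, h⟩ : Fin ((n0 :: ns).sum)) : ℕ) else x with hf
  have hfval : ∀ (x : ℕ) (h : x < (n0 :: ns).sum), f x = (P.pair ⟨x, h⟩ : ℕ) := by
    intro x h; exact dif_pos h
  have hlt : ∀ x, x < (n0 :: ns).sum → f x < (n0 :: ns).sum := by
    intro x h; rw [hfval x h]; exact (P.pair ⟨x, h⟩).2
  have hinv : ∀ x, x < (n0 :: ns).sum → f (f x) = x := by
    intro x h
    rw [hfval x h, hfval _ (P.pair ⟨x, h⟩).2]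
    exact congrArg Fin.val (P.involutive ⟨x, h⟩)
  have hne : ∀ x, x < (n0 :: ns).sum → f x ≠ x := by
    intro x h hx
    apply P.fixedFree ⟨x, h⟩
    apply Fin.ext
    rw [← hfval x h, hx]
  have hncn : ∀ i j, i < (n0 :: ns).sum → j < (n0 :: ns).sum → i < j → j < f i → f i < f j → False := by
    intro i j hi hj h1 h2 h3
    apply hnc
    rw [hfval i hi] at h2 h3
    rw [hfval j hj] at h3
    exact ⟨⟨i, hi⟩, ⟨j, hj⟩, by rw [Fin.lt_def]; exact h1,
      by rw [Fin.lt_def]; exact h2, by rw [Fin.lt_def]; exact h3⟩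
  have hBR : BlocksResp f 0 (n0 :: ns) := by
    apply BR_of
    intro k hk x hx1 hx2
    simp only [Nat.zero_add] at hx1 hx2 ⊢
    have hsumle : ((n0 :: ns).take k).sum + (n0 :: ns).getD k 0 ≤ (n0 :: ns).sum := by
      have h1 : ((n0 :: ns).take (k + 1)).sum
          = ((n0 :: ns).take k).sum + (n0 :: ns).getD k 0 := by
        rw [List.sum_take_succ _ k hk, List.getD_eq_getElem _ _ hk]
      have h2 : ((n0 :: ns).take (k + 1)).sum ≤ (n0 :: ns).sum := by
        exact List.Sublist.sum_le_sum (List.take_sublist _ _) (fun a _ => Nat.zero_le a)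
      omega
    have hxN : x < (n0 :: ns).sum := by omega
    have hnotin := hresp ⟨x, hxN⟩ k ⟨hk, hx1, hx2⟩
    rw [← hfval x hxN] at hnotin
    by_contra hcon
    push_neg at hcon
    exact hnotin ⟨hk, hcon.1, hcon.2⟩
  have hBR' : (∀ x, 0 ≤ x → x < 0 + n0 → f x < 0 ∨ 0 + n0 ≤ f x)
      ∧ BlocksResp f (0 + n0) ns := hBR
  obtain ⟨hb0, hBRtail⟩ := hBR'
  rw [Nat.zero_add] at hBRtail
  have hfilter0 : (List.range n0).filter (fun x => decide (n0 ≤ f x)) = List.range n0 := by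
    rw [List.filter_eq_self]
    intro a ha
    rw [List.mem_range] at ha
    simp only [decide_eq_true_eq]
    rcases hb0 a (Nat.zero_le a) (by omega) with h | h
    · omega
    · omega
  have hsum : n0 + ns.sum = (n0 :: ns).sum := by rw [List.sum_cons]
  have hmaster := master (n0 :: ns).sum f hinv hlt hncn ns n0 hsum hBRtail
  have hge : ∀ x, x < (n0 :: ns).sum → f x < x → n0 ≤ x := by
    intro x hx hfx
    by_contra hcon
    push_neg at hcon
    rcases hb0 x (Nat.zero_le x) (by omega) with h | h
    · omega
    · omega
  have hpairseq : (tauRun n0 (ns.zip (mkPs f n0 ns))).2.1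
      = ((List.range' n0 ns.sum).filter (fun x => decide (f x < x))).map (fun x => (f x, x)) := by
    rw [tauRun, ← hfilter0, hmaster.2 []]
    simp
  refine ⟨mkPs f n0 ns, ⟨mkPs_length f ns n0, ?_, ?_⟩, ?_⟩
  · have := hmaster.1
    rw [hfilter0, List.length_range] at this
    exact this
  · intro i
    have hiN : (i : ℕ) < (n0 :: ns).sum := i.2
    rcases Nat.lt_trichotomy (f i) i with hlt' | heq | hgt
    · right
      have hm : ((f (i : ℕ), (i : ℕ)) : ℕ × ℕ) ∈ (tauRun n0 (ns.zip (mkPs f n0 ns))).2.1 := by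
        rw [hpairseq]
        refine List.mem_map_of_mem ?_
        rw [List.mem_filter, List.mem_range'_1]
        refine ⟨⟨hge _ hiN hlt', by omega⟩, by simpa using hlt'⟩
      rw [hfval _ hiN] at hm
      exact hm
    · exact (hne _ hiN heq).elim
    · left
      have hbN : f (i : ℕ) < (n0 :: ns).sum := hlt _ hiN
      have hm : ((f (f (i : ℕ)), f (i : ℕ)) : ℕ × ℕ)
          ∈ (tauRun n0 (ns.zip (mkPs f n0 ns))).2.1 := by
        rw [hpairseq]
        refine List.mem_map_of_mem ?_
        rw [List.mem_filter, List.mem_range'_1]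
        have hflt : f (f (i : ℕ)) < f (i : ℕ) := by rw [hinv _ hiN]; exact hgt
        refine ⟨⟨hge _ hbN hflt, by omega⟩, by simpa using hflt⟩
      rw [hinv _ hiN, hfval _ hiN] at hm
      exact hm
  · rintro ps' ⟨hlen', hdef', heq'⟩
    apply uniq (n0 :: ns).sum f hinv hlt hncn ns ps' n0 hsum hBRtail hlen'
    · rw [hfilter0, List.length_range]
      exact hdef'
    · intro i hiN hfi hni
      have hrw : (tauRun n0 (ns.zip ps')).2.1
          = (List.foldl tauStep ((List.range n0).filter (fun x => decide (n0 ≤ f x)), [], n0)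
              (ns.zip ps')).2.1 := by
        rw [hfilter0]
        rfl
      rcases heq' ⟨i, hiN⟩ with h | h
      · exfalso
        have h' : ((i, f i) : ℕ × ℕ) ∈ (tauRun n0 (ns.zip ps')).2.1 := by
          rw [hfval i hiN]; exact h
        rw [tauRun] at h'
        rcases foldl_facts (ns.zip ps') (List.range n0, [], n0)
            (by intro x hx; rw [List.mem_range] at hx; exact hx) _ h' with h'' | ⟨h1, _, _⟩
        · have h''' : ((i, f i) : ℕ × ℕ) ∈ ([] : List (ℕ × ℕ)) := h''
          simp at h'''
        · have h1' : i < f i := h1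
          omega
      · have h' : ((f i, i) : ℕ × ℕ) ∈ (tauRun n0 (ns.zip ps')).2.1 := by
          rw [hfval i hiN]; exact h
        rw [hrw] at h'
        exact h'
end
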